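/- arXiv:2603.16431 — 5 statements merged into one kernel-verified Lean document; each statement's English description precedes it below -/
import Mathlib

section
/- Poissonization identity for the expected occupancy count: for every t > 0, Σ_{j≥1} (1 - e^{-t p_j}) = ∫_0^∞ e^{-x} ν(t/x) dx, where ν(u) = card{ j ≥ 1 : p_j ≥ 1/u }; in particular both sides are finite. -/
open MeasureTheory Real
open scoped ENNReal

/-- The counting function `ν(u) = card{ j ≥ 1 : p_j ≥ 1/u }` of the frequencies. -/
noncomputable def nuCount (p : ℕ → ℝ) (u : ℝ) : ℕ := Set.ncard {j : ℕ | 1 / u ≤ p j}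

/-- **Poissonization identity for the expected occupancy count:** if `(p_j)_{j≥1}` are
strictly positive with `Σ_j p_j < ∞`, then for every `t > 0`,
`Σ_{j≥1} (1 - e^{-t p_j}) = ∫_0^∞ e^{-x} ν(t/x) dx`, where
`ν(u) = card{ j ≥ 1 : p_j ≥ 1/u }`; in particular both sides are finite. -/
theorem poissonization_identity (p : ℕ → ℝ) (hp : ∀ j, 0 < p j) (hsum : Summable p)
    (t : ℝ) (ht : 0 < t) :
    Summable (fun j : ℕ => 1 - Real.exp (-(t * p j))) ∧
    IntegrableOn (fun x : ℝ => Real.exp (-x) * (nuCount p (t / x) : ℝ)) (Set.Ioi 0) volume ∧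
    ∑' j : ℕ, (1 - Real.exp (-(t * p j))) =
      ∫ x in Set.Ioi (0 : ℝ), Real.exp (-x) * (nuCount p (t / x) : ℝ) := by
  set f : ℝ → ℝ := fun x => Real.exp (-x) * (nuCount p (t / x) : ℝ) with hf
  -- summability
  have hnn : ∀ j, 0 ≤ 1 - Real.exp (-(t * p j)) := by
    intro j
    have : Real.exp (-(t * p j)) ≤ 1 :=
      Real.exp_le_one_iff.mpr (by nlinarith [(hp j).le])
    linarith
  have hS : Summable (fun j : ℕ => 1 - Real.exp (-(t * p j))) := by
    refine Summable.of_nonneg_of_le hnn (fun j => ?_) (hsum.mul_left t)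
    have := Real.add_one_le_exp (-(t * p j))
    linarith
  -- indicator functions
  set g : ℕ → ℝ → ℝ≥0∞ := fun j x =>
    (Set.Ioc (0:ℝ) (t * p j)).indicator (fun y => ENNReal.ofReal (Real.exp (-y))) x with hg
  have hgmeas : ∀ j, Measurable (g j) := fun j =>
    (ENNReal.measurable_ofReal.comp
      (Real.continuous_exp.comp continuous_neg).measurable).indicator measurableSet_Ioc
  -- pointwise identity on Ioi 0
  have hpt : ∀ x ∈ Set.Ioi (0:ℝ), ENNReal.ofReal (f x) = ∑' j, g j x := by
    intro x hx
    rw [Set.mem_Ioi] at hx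
    have hsetx : {j : ℕ | 1 / (t / x) ≤ p j} = {j : ℕ | x ≤ t * p j} := by
      ext j
      rw [Set.mem_setOf_eq, Set.mem_setOf_eq, one_div_div, div_le_iff₀ ht, mul_comm]
    have hfin : ({j : ℕ | x ≤ t * p j}).Finite := by
      have h0 : ∀ᶠ j in Filter.atTop, p j < x / t :=
        hsum.tendsto_atTop_zero.eventually_lt_const (div_pos hx ht)
      rw [← Nat.cofinite_eq_atTop, Filter.eventually_cofinite] at h0
      refine h0.subset fun j hj => ?_
      simp only [Set.mem_setOf_eq] at hj ⊢
      rw [not_lt, div_le_iff₀ ht, mul_comm]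
      exact hj
    have hncard : nuCount p (t / x) = ({j : ℕ | x ≤ t * p j}).ncard := by
      rw [nuCount, hsetx]
    have hcard : ((nuCount p (t / x) : ℕ) : ℝ≥0∞) =
        ∑' j, ({j : ℕ | x ≤ t * p j}).indicator (fun _ => (1:ℝ≥0∞)) j := by
      rw [hncard, ← tsum_subtype, ENNReal.tsum_set_one, ← hfin.cast_ncard_eq]
      simp
    have hfx : ENNReal.ofReal (f x) =
        ENNReal.ofReal (Real.exp (-x)) * ((nuCount p (t / x) : ℕ) : ℝ≥0∞) := by
      rw [hf, ENNReal.ofReal_mul (Real.exp_nonneg _), ENNReal.ofReal_natCast]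
    rw [hfx, hcard, ← ENNReal.tsum_mul_left]
    refine tsum_congr fun j => ?_
    simp only [hg]
    by_cases hj : x ≤ t * p j
    · rw [Set.indicator_of_mem (by exact hj), Set.indicator_of_mem (Set.mem_Ioc.mpr ⟨hx, hj⟩),
        mul_one]
    · rw [Set.indicator_of_notMem (by exact hj),
        Set.indicator_of_notMem (fun h => hj (Set.mem_Ioc.mp h).2), mul_zero]
  -- per-index lintegral
  have hval : ∀ j, ∫⁻ x in Set.Ioi (0:ℝ), g j x = ENNReal.ofReal (1 - Real.exp (-(t * p j))) := by
    intro j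
    have hsub : Set.Ioc (0:ℝ) (t * p j) ∩ Set.Ioi 0 = Set.Ioc (0:ℝ) (t * p j) :=
      Set.inter_eq_left.mpr fun y hy => hy.1
    simp only [hg]
    rw [lintegral_indicator measurableSet_Ioc, Measure.restrict_restrict measurableSet_Ioc,
      hsub]
    have hint : IntegrableOn (fun y => Real.exp (-y)) (Set.Ioc 0 (t * p j)) volume :=
      (Real.continuous_exp.comp continuous_neg).integrableOn_Ioc
    rw [← ofReal_integral_eq_lintegral_ofReal hint
      (Filter.Eventually.of_forall fun y => (Real.exp_nonneg _))]
    congr 1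
    rw [← intervalIntegral.integral_of_le (mul_nonneg ht.le (hp j).le),
      intervalIntegral.integral_comp_neg (fun y => Real.exp y)]
    simp [integral_exp]
  -- main lintegral identity
  have key : ∫⁻ x in Set.Ioi (0:ℝ), ENNReal.ofReal (f x) =
      ENNReal.ofReal (∑' j : ℕ, (1 - Real.exp (-(t * p j)))) := by
    rw [setLIntegral_congr_fun measurableSet_Ioi hpt,
      lintegral_tsum (fun j => (hgmeas j).aemeasurable),
      ENNReal.ofReal_tsum_of_nonneg hnn hS]
    exact tsum_congr hval
  -- nonnegativity of f
  have hfnn : ∀ x, 0 ≤ f x := fun x =>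
    mul_nonneg (Real.exp_nonneg _) (Nat.cast_nonneg _)
  -- measurability
  have hGmeas : Measurable (fun x => (∑' j, g j x).toReal) :=
    (Measurable.ennreal_tsum hgmeas).ennreal_toReal
  have haesm : AEStronglyMeasurable f (volume.restrict (Set.Ioi (0:ℝ))) := by
    refine hGmeas.aestronglyMeasurable.congr ?_
    rw [Filter.EventuallyEq, ae_restrict_iff' measurableSet_Ioi]
    refine Filter.Eventually.of_forall fun x hx => ?_
    rw [← hpt x hx, ENNReal.toReal_ofReal (hfnn x)]
  have hInt : IntegrableOn f (Set.Ioi 0) volume := by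
    refine ⟨haesm, ?_⟩
    rw [hasFiniteIntegral_iff_ofReal (Filter.Eventually.of_forall hfnn), key]
    exact ENNReal.ofReal_lt_top
  refine ⟨hS, hInt, ?_⟩
  rw [integral_eq_lintegral_of_nonneg_ae (Filter.Eventually.of_forall hfnn) haesm, key,
    ENNReal.toReal_ofReal (tsum_nonneg hnn)]
end

section
/- Itô-isometry computation for the stochastic-integral representation of Z_α^{(2)}: for every α ∈ (0,1) and all s, t > 0, ∫_0^∞ (1 - e^{-s x^{-1/α}})(1 - e^{-t x^{-1/α}}) dx = Γ(1-α) ( s^α + t^α - (s+t)^α ), where Γ denotes Euler's Gamma function; consequently the function (s,t) ↦ s^α + t^α - (s+t)^α is a (positive semidefinite) covariance function, being 1/Γ(1-α) times a Gram matrix of the L²(0,∞) functions x ↦ 1 - e^{-t x^{-1/α}}. -/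
open MeasureTheory Real

open Set Filter Topology

lemma one_sub_exp_neg_le' {v : ℝ} : 1 - Real.exp (-v) ≤ v := by
  nlinarith [Real.add_one_le_exp (-v)]

lemma one_sub_exp_neg_nonneg' {v : ℝ} (hv : 0 ≤ v) : 0 ≤ 1 - Real.exp (-v) := by
  nlinarith [Real.exp_le_one_iff.mpr (neg_nonpos.mpr hv)]

lemma one_sub_exp_neg_le_one' {v : ℝ} : 1 - Real.exp (-v) ≤ 1 := by
  nlinarith [Real.exp_pos (-v)]

lemma g_integrable {α a : ℝ} (hα0 : 0 < α) (hα1 : α < 1) (ha : 0 < a) :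
    IntegrableOn (fun x => 1 - Real.exp (-(a * x ^ (-(1 / α))))) (Ioi (0:ℝ)) := by
  have hmeas : AEStronglyMeasurable (fun x : ℝ => 1 - Real.exp (-(a * x ^ (-(1 / α)))))
      (volume.restrict (Ioi (0:ℝ))) := by
    apply Measurable.aestronglyMeasurable
    fun_prop
  have hsplit : Ioc (0:ℝ) 1 ∪ Ioi 1 = Ioi 0 := Ioc_union_Ioi_eq_Ioi zero_le_one
  rw [← hsplit]
  apply IntegrableOn.union
  · apply Integrable.mono' (integrable_const (1:ℝ)) (hmeas.mono_measure
      (Measure.restrict_mono Ioc_subset_Ioi_self le_rfl))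
    filter_upwards [ae_restrict_mem measurableSet_Ioc] with x hx
    have hx0 : 0 < x := hx.1
    have hv : 0 ≤ a * x ^ (-(1 / α)) := by positivity
    rw [Real.norm_eq_abs, abs_of_nonneg (one_sub_exp_neg_nonneg' hv)]
    exact one_sub_exp_neg_le_one'
  · have hexp : -(1/α) < -1 := by
      rw [neg_lt_neg_iff]
      exact (one_lt_one_div hα0 hα1)
    apply Integrable.mono' (((integrableOn_Ioi_rpow_of_lt hexp one_pos)).const_mul a)
      (hmeas.mono_measure (Measure.restrict_mono (Ioi_subset_Ioi zero_le_one) le_rfl))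
    filter_upwards [ae_restrict_mem measurableSet_Ioi] with x hx
    have hx0 : (0:ℝ) < x := lt_trans one_pos hx
    have hv : 0 ≤ a * x ^ (-(1 / α)) := by positivity
    rw [Real.norm_eq_abs, abs_of_nonneg (one_sub_exp_neg_nonneg' hv)]
    exact one_sub_exp_neg_le' 

lemma T1_integrable {α a : ℝ} (hα0 : 0 < α) (hα1 : α < 1) (ha : 0 < a) :
    IntegrableOn (fun y : ℝ => -(a * Real.exp (-(a * y))) * y ^ (-α)) (Ioi 0) := by
  have h := integrableOn_rpow_mul_exp_neg_mul_rpow (p := 1) (s := -α) (b := a)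
    (by linarith) zero_lt_one ha
  have h2 : IntegrableOn (fun y : ℝ => (-a) * (y ^ (-α) * Real.exp (-a * y ^ (1:ℝ)))) (Ioi 0) :=
    h.const_mul _
  refine h2.congr_fun (fun y hy => ?_) measurableSet_Ioi
  beta_reduce
  rw [Real.rpow_one, show -a * y = -(a * y) by ring]
  ring

lemma T2_integrable {α a : ℝ} (hα0 : 0 < α) (hα1 : α < 1) (ha : 0 < a) :
    IntegrableOn (fun y : ℝ => (Real.exp (-(a * y)) - 1) * (-α * y ^ (-α - 1))) (Ioi 0) := by
  have hmeas : AEStronglyMeasurable (fun y : ℝ => (Real.exp (-(a * y)) - 1) * (-α * y ^ (-α - 1)))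
      (volume.restrict (Ioi (0:ℝ))) := by
    apply Measurable.aestronglyMeasurable
    fun_prop
  have hsplit : Ioc (0:ℝ) 1 ∪ Ioi 1 = Ioi 0 := Ioc_union_Ioi_eq_Ioi zero_le_one
  rw [← hsplit]
  apply IntegrableOn.union
  · have hint : IntegrableOn (fun y : ℝ => y ^ (-α)) (Ioc (0:ℝ) 1) := by
      rw [← intervalIntegrable_iff_integrableOn_Ioc_of_le zero_le_one]
      apply intervalIntegral.intervalIntegrable_rpow'
      linarith
    apply Integrable.mono' (hint.const_mul (α * a)) (hmeas.mono_measure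
      (Measure.restrict_mono Ioc_subset_Ioi_self le_rfl))
    filter_upwards [ae_restrict_mem measurableSet_Ioc] with y hy
    have hy0 : 0 < y := hy.1
    have hv : 0 ≤ a * y := by positivity
    have h1 : 0 ≤ 1 - Real.exp (-(a * y)) := one_sub_exp_neg_nonneg' hv
    have h2 : 1 - Real.exp (-(a * y)) ≤ a * y := one_sub_exp_neg_le'
    have hrw : (Real.exp (-(a * y)) - 1) * (-α * y ^ (-α - 1))
        = (1 - Real.exp (-(a * y))) * (α * y ^ (-α - 1)) := by ring
    rw [Real.norm_eq_abs, hrw, abs_of_nonneg (by positivity)]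
    have hyp : y * y ^ (-α - 1) = y ^ (-α) := by
      rw [← Real.rpow_one_add' hy0.le (by intro h; nlinarith)]
      norm_num
    have : (1 - Real.exp (-(a * y))) * (α * y ^ (-α - 1))
        ≤ (a * y) * (α * y ^ (-α - 1)) := by
      apply mul_le_mul_of_nonneg_right h2 (by positivity)
    calc (1 - Real.exp (-(a * y))) * (α * y ^ (-α - 1))
        ≤ (a * y) * (α * y ^ (-α - 1)) := this
      _ = α * a * (y * y ^ (-α - 1)) := by ring
      _ = α * a * y ^ (-α) := by rw [hyp]
  · have hint : IntegrableOn (fun y : ℝ => y ^ (-α - 1)) (Ioi (1:ℝ)) :=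
      integrableOn_Ioi_rpow_of_lt (by linarith) one_pos
    apply Integrable.mono' (hint.const_mul α) (hmeas.mono_measure
      (Measure.restrict_mono (Ioi_subset_Ioi zero_le_one) le_rfl))
    filter_upwards [ae_restrict_mem measurableSet_Ioi] with y hy
    have hy0 : (0:ℝ) < y := lt_trans one_pos hy
    have hv : 0 ≤ a * y := by positivity
    have h1 : 0 ≤ 1 - Real.exp (-(a * y)) := one_sub_exp_neg_nonneg' hv
    have h1' : 1 - Real.exp (-(a * y)) ≤ 1 := one_sub_exp_neg_le_one'
    have hrw : (Real.exp (-(a * y)) - 1) * (-α * y ^ (-α - 1))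
        = (1 - Real.exp (-(a * y))) * (α * y ^ (-α - 1)) := by ring
    rw [Real.norm_eq_abs, hrw, abs_of_nonneg (by positivity)]
    have hp : 0 ≤ y ^ (-α - 1) := Real.rpow_nonneg hy0.le _
    nlinarith [mul_le_mul_of_nonneg_right h1' (mul_nonneg hα0.le hp)]

lemma K_value {α a : ℝ} (hα0 : 0 < α) (hα1 : α < 1) (ha : 0 < a) :
    ∫ y in Ioi (0:ℝ), (Real.exp (-(a * y)) - 1) * (-α * y ^ (-α - 1))
      = Real.Gamma (1 - α) * a ^ α := by
  set H : ℝ → ℝ := fun y => (Real.exp (-(a * y)) - 1) * y ^ (-α) with hH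
  have hderiv : ∀ y ∈ Ioi (0:ℝ), HasDerivAt H
      (-(a * Real.exp (-(a * y))) * y ^ (-α)
        + (Real.exp (-(a * y)) - 1) * (-α * y ^ (-α - 1))) y := by
    intro y hy
    have hlin : HasDerivAt (fun y : ℝ => -(a * y)) (-a) y := by
      have h := ((hasDerivAt_id y).const_mul a).neg; rw [mul_one] at h; exact h
    have h1 : HasDerivAt (fun y : ℝ => Real.exp (-(a * y)) - 1)
        (-(a * Real.exp (-(a * y)))) y := by
      have := ((Real.hasDerivAt_exp (-(a * y))).comp y hlin).sub_const 1
      exact this.congr_deriv (by ring)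
    have h2 : HasDerivAt (fun y : ℝ => y ^ (-α)) (-α * y ^ (-α - 1)) y :=
      Real.hasDerivAt_rpow_const (Or.inl (ne_of_gt hy))
    exact h1.mul h2
  have hint : IntegrableOn (fun y : ℝ =>
      -(a * Real.exp (-(a * y))) * y ^ (-α)
        + (Real.exp (-(a * y)) - 1) * (-α * y ^ (-α - 1))) (Ioi 0) :=
    (T1_integrable hα0 hα1 ha).add (T2_integrable hα0 hα1 ha)
  have htop : Tendsto H atTop (𝓝 0) := by
    have t0 : Tendsto (fun y : ℝ => -(a * y)) atTop atBot :=
      tendsto_neg_atTop_atBot.comp (tendsto_id.const_mul_atTop ha)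
    have t1 : Tendsto (fun y : ℝ => Real.exp (-(a * y)) - 1) atTop (𝓝 (0 - 1)) :=
      (Real.tendsto_exp_atBot.comp t0).sub_const 1
    have t2 : Tendsto (fun y : ℝ => y ^ (-α)) atTop (𝓝 0) :=
      tendsto_rpow_neg_atTop hα0
    have := t1.mul t2
    simpa using this
  have hcont : ContinuousWithinAt H (Ici 0) 0 := by
    have hH0 : H 0 = 0 := by simp [hH]
    rw [ContinuousWithinAt, hH0]
    have hc : ContinuousAt (fun y : ℝ => y ^ (1 - α)) 0 :=
      Real.continuousAt_rpow_const 0 (1 - α) (Or.inr (by linarith))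
    have hg : Tendsto (fun y : ℝ => -(a * y ^ (1 - α))) (nhdsWithin 0 (Ici 0))
        (𝓝 (-(a * (0:ℝ) ^ (1 - α)))) :=
      (((hc.tendsto).mono_left nhdsWithin_le_nhds).const_mul a).neg
    rw [Real.zero_rpow (by intro h; linarith), mul_zero, neg_zero] at hg
    refine tendsto_of_tendsto_of_tendsto_of_le_of_le' hg tendsto_const_nhds ?_ ?_
    · filter_upwards [self_mem_nhdsWithin] with y (hy : y ∈ Ici 0)
      rcases eq_or_lt_of_le (mem_Ici.mp hy) with h | h
      · simp [hH, ← h, Real.zero_rpow (by intro hh; linarith : (1:ℝ) - α ≠ 0)]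
      · have hpo : (0:ℝ) ≤ y ^ (-α) := Real.rpow_nonneg h.le _
        have hle : 1 - Real.exp (-(a * y)) ≤ a * y := one_sub_exp_neg_le'
        have hsplit : y ^ (1 - α) = y * y ^ (-α) := by
          rw [show (1:ℝ) - α = 1 + (-α) by ring, Real.rpow_add h, Real.rpow_one]
        have := mul_le_mul_of_nonneg_right hle hpo
        simp only [hH]
        nlinarith
    · filter_upwards [self_mem_nhdsWithin] with y (hy : y ∈ Ici 0)
      have h1 : 0 ≤ 1 - Real.exp (-(a * y)) :=
        one_sub_exp_neg_nonneg' (mul_nonneg ha.le (mem_Ici.mp hy))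
      have hpo : (0:ℝ) ≤ y ^ (-α) := Real.rpow_nonneg (mem_Ici.mp hy) _
      have := mul_nonneg h1 hpo
      simp only [hH]
      nlinarith
  have key := integral_Ioi_of_hasDerivAt_of_tendsto hcont hderiv hint htop
  have hH0 : H 0 = 0 := by simp [hH]
  rw [hH0, sub_zero] at key
  rw [integral_add (T1_integrable hα0 hα1 ha) (T2_integrable hα0 hα1 ha)] at key
  have hT1 : ∫ y in Ioi (0:ℝ), -(a * Real.exp (-(a * y))) * y ^ (-α)
      = (-a) * ((1 / a) ^ (1 - α) * Real.Gamma (1 - α)) := by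
    have hgamma := Real.integral_rpow_mul_exp_neg_mul_Ioi
      (show (0:ℝ) < 1 - α by linarith) ha
    rw [show (1:ℝ) - α - 1 = -α by ring] at hgamma
    rw [← hgamma, ← MeasureTheory.integral_const_mul]
    refine setIntegral_congr_fun measurableSet_Ioi (fun y hy => ?_)
    ring
  rw [hT1] at key
  have harith : a * (1 / a) ^ (1 - α) = a ^ α := by
    rw [one_div, Real.inv_rpow ha.le, ← Real.rpow_neg ha.le]
    nth_rewrite 1 [← Real.rpow_one a]
    rw [← Real.rpow_add ha]
    congr 1
    ring
  have : ∫ y in Ioi (0:ℝ), (Real.exp (-(a * y)) - 1) * (-α * y ^ (-α - 1))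
      = a * ((1 / a) ^ (1 - α) * Real.Gamma (1 - α)) := by linarith
  rw [this, ← mul_assoc, harith, mul_comm]

lemma J_value {α a : ℝ} (hα0 : 0 < α) (hα1 : α < 1) (ha : 0 < a) :
    ∫ x in Ioi (0:ℝ), (1 - Real.exp (-(a * x ^ (-(1 / α)))))
      = Real.Gamma (1 - α) * a ^ α := by
  have hα' : α ≠ 0 := ne_of_gt hα0
  have hp : (-(1/α)) ≠ 0 := by simp [hα']
  have hcv := MeasureTheory.integral_comp_rpow_Ioi
    (fun y => (Real.exp (-(a * y)) - 1) * (-α * y ^ (-α - 1))) hp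
  rw [← K_value hα0 hα1 ha, ← hcv]
  refine setIntegral_congr_fun measurableSet_Ioi (fun x hx => ?_)
  have hx0 : (0:ℝ) < x := hx
  simp only [smul_eq_mul]
  rw [abs_neg, abs_of_pos (one_div_pos.mpr hα0)]
  have e1 : (x ^ (-(1/α))) ^ (-α - 1) = x ^ ((-(1/α)) * (-α - 1)) :=
    (Real.rpow_mul hx0.le _ _).symm
  show 1 - Real.exp (-(a * x ^ (-(1/α)))) = 1/α * x ^ (-(1/α) - 1) * ((Real.exp (-(a * x ^ (-(1/α)))) - 1) * (-α * (x ^ (-(1/α))) ^ (-α - 1)))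
  rw [e1]
  have e2 : x ^ (-(1/α) - 1) * x ^ ((-(1/α)) * (-α - 1)) = 1 := by
    rw [← Real.rpow_add hx0, show (-(1/α) - 1) + (-(1/α)) * (-α - 1) = 0 by field_simp; ring]
    exact Real.rpow_zero x
  have e3 : (1/α) * α = 1 := one_div_mul_cancel hα'
  set E := Real.exp (-(a * x ^ (-(1/α))))
  set X1 := x ^ (-(1/α) - 1)
  set X2 := x ^ ((-(1/α)) * (-α - 1))
  calc (1 - E) = ((1 - E) * (X1 * X2)) * ((1/α) * α) := by rw [e2, e3]; ring
    _ = 1/α * X1 * ((E - 1) * (-α * X2)) := by ring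

lemma prod_integrable {α s t : ℝ} (hα0 : 0 < α) (hα1 : α < 1) (hs : 0 < s) (ht : 0 < t) :
    IntegrableOn (fun x => (1 - Real.exp (-(s * x ^ (-(1 / α)))))
      * (1 - Real.exp (-(t * x ^ (-(1 / α)))))) (Ioi (0:ℝ)) := by
  apply Integrable.mono' (g_integrable hα0 hα1 hs)
  · apply Measurable.aestronglyMeasurable
    fun_prop
  · filter_upwards [ae_restrict_mem measurableSet_Ioi] with x hx
    have hx0 : (0:ℝ) < x := hx
    have hv1 : 0 ≤ s * x ^ (-(1 / α)) := by positivity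
    have hv2 : 0 ≤ t * x ^ (-(1 / α)) := by positivity
    have h1 := one_sub_exp_neg_nonneg' hv1
    have h2 := one_sub_exp_neg_nonneg' hv2
    have h2' := one_sub_exp_neg_le_one' (v := t * x ^ (-(1 / α)))
    rw [Real.norm_eq_abs, abs_of_nonneg (mul_nonneg h1 h2)]
    nlinarith

lemma prod_value {α s t : ℝ} (hα0 : 0 < α) (hα1 : α < 1) (hs : 0 < s) (ht : 0 < t) :
    ∫ x in Ioi (0:ℝ), (1 - Real.exp (-(s * x ^ (-(1 / α)))))
        * (1 - Real.exp (-(t * x ^ (-(1 / α)))))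
      = Real.Gamma (1 - α) * (s ^ α + t ^ α - (s + t) ^ α) := by
  have hfun : (fun x : ℝ => (1 - Real.exp (-(s * x ^ (-(1 / α)))))
      * (1 - Real.exp (-(t * x ^ (-(1 / α))))))
      = fun x : ℝ => ((1 - Real.exp (-(s * x ^ (-(1 / α)))))
          + (1 - Real.exp (-(t * x ^ (-(1 / α))))))
        - (1 - Real.exp (-((s + t) * x ^ (-(1 / α))))) := by
    funext x
    have h : Real.exp (-(s * x ^ (-(1 / α)))) * Real.exp (-(t * x ^ (-(1 / α))))
        = Real.exp (-((s + t) * x ^ (-(1 / α)))) := by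
      rw [← Real.exp_add]
      congr 1
      ring
    linear_combination h
  have hadd : IntegrableOn (fun x : ℝ => (1 - Real.exp (-(s * x ^ (-(1 / α)))))
      + (1 - Real.exp (-(t * x ^ (-(1 / α)))))) (Ioi (0:ℝ)) :=
    (g_integrable hα0 hα1 hs).add (g_integrable hα0 hα1 ht)
  rw [hfun, integral_sub hadd (g_integrable hα0 hα1 (by linarith : (0:ℝ) < s + t)),
    integral_add (g_integrable hα0 hα1 hs) (g_integrable hα0 hα1 ht),
    J_value hα0 hα1 hs, J_value hα0 hα1 ht, J_value hα0 hα1 (show (0:ℝ) < s + t by linarith)]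
  ring

/-- **Itô-isometry computation for the stochastic-integral representation of `Z_α^{(2)}`.**
For every `α ∈ (0,1)` and all `s, t > 0`,
`∫_0^∞ (1 - e^{-s x^{-1/α}})(1 - e^{-t x^{-1/α}}) dx = Γ(1-α)(s^α + t^α - (s+t)^α)`;
consequently `(s,t) ↦ s^α + t^α - (s+t)^α` is a positive semidefinite covariance function. -/
theorem ito_isometry_covariance (α s t : ℝ) (hα0 : 0 < α) (hα1 : α < 1)
    (hs : 0 < s) (ht : 0 < t) :
    (∫ x in Set.Ioi (0 : ℝ),
        (1 - Real.exp (-(s * x ^ (-(1 / α))))) * (1 - Real.exp (-(t * x ^ (-(1 / α))))) =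
      Real.Gamma (1 - α) * (s ^ α + t ^ α - (s + t) ^ α)) ∧
    (∀ (n : ℕ) (u : Fin n → ℝ), (∀ i, 0 < u i) → ∀ c : Fin n → ℝ,
      0 ≤ ∑ i, ∑ j, c i * c j * (u i ^ α + u j ^ α - (u i + u j) ^ α)) := by
  constructor
  · exact prod_value hα0 hα1 hs ht
  · intro n u hu c
    have hΓ : 0 < Real.Gamma (1 - α) := Real.Gamma_pos_of_pos (by linarith)
    set f : Fin n → ℝ → ℝ := fun i x => 1 - Real.exp (-(u i * x ^ (-(1 / α)))) with hf
    have hint : ∀ i j : Fin n, IntegrableOn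
        (fun x => (c i * c j) * (f i x * f j x)) (Ioi (0:ℝ)) :=
      fun i j => (prod_integrable hα0 hα1 (hu i) (hu j)).const_mul _
    have key : Real.Gamma (1 - α)
        * (∑ i, ∑ j, c i * c j * (u i ^ α + u j ^ α - (u i + u j) ^ α))
        = ∫ x in Ioi (0:ℝ), (∑ i, c i * f i x) ^ 2 := by
      calc Real.Gamma (1 - α)
            * (∑ i, ∑ j, c i * c j * (u i ^ α + u j ^ α - (u i + u j) ^ α))
          = ∑ i, ∑ j, (c i * c j)
              * (Real.Gamma (1 - α) * (u i ^ α + u j ^ α - (u i + u j) ^ α)) := by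
            rw [Finset.mul_sum]
            refine Finset.sum_congr rfl fun i _ => ?_
            rw [Finset.mul_sum]
            exact Finset.sum_congr rfl fun j _ => by ring
        _ = ∑ i, ∑ j, ∫ x in Ioi (0:ℝ), (c i * c j) * (f i x * f j x) := by
            refine Finset.sum_congr rfl fun i _ => Finset.sum_congr rfl fun j _ => ?_
            rw [MeasureTheory.integral_const_mul, prod_value hα0 hα1 (hu i) (hu j)]
        _ = ∑ i, ∫ x in Ioi (0:ℝ), ∑ j, (c i * c j) * (f i x * f j x) :=
            Finset.sum_congr rfl fun i _ =>
              (integral_finset_sum _ fun j _ => hint i j).symm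
        _ = ∫ x in Ioi (0:ℝ), ∑ i, ∑ j, (c i * c j) * (f i x * f j x) :=
            (integral_finset_sum _ fun i _ =>
              integrable_finset_sum _ fun j _ => hint i j).symm
        _ = ∫ x in Ioi (0:ℝ), (∑ i, c i * f i x) ^ 2 := by
            refine setIntegral_congr_fun measurableSet_Ioi (fun x _ => ?_)
            rw [sq, Finset.sum_mul_sum]
            exact Finset.sum_congr rfl fun i _ => Finset.sum_congr rfl fun j _ => by ring
    have hnn : 0 ≤ ∫ x in Ioi (0:ℝ), (∑ i, c i * f i x) ^ 2 :=
      setIntegral_nonneg measurableSet_Ioi fun x _ => sq_nonneg _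
    nlinarith [key, hnn, hΓ]
end

section
/- Small-time estimate in the de-Poissonization step (equation (eq:small t)): if Γ : ℕ → [0, ∞) is nondecreasing with Γ_0 = 0 and Γ_n / n → 1 as n → ∞, then for every α ∈ (0,1) and every β > 1/2, lim_{n→∞} n^{α/2} sup_{t ∈ [0, n^{-β}]} | (Γ_{⌊n t⌋} / n)^α - t^α | = 0. -/
open Filter Set

/-- **Small-time estimate in the de-Poissonization step** (equation (eq:small t)):
if `Γ : ℕ → [0,∞)` is nondecreasing with `Γ 0 = 0` and `Γ n / n → 1`, then for every
`α ∈ (0,1)` and `β > 1/2`, `n^{α/2} sup_{t ∈ [0, n^{-β}]} |(Γ_{⌊nt⌋}/n)^α - t^α| → 0`. -/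
theorem small_time_estimate (Γ : ℕ → ℝ) (hnonneg : ∀ n, 0 ≤ Γ n)
    (hmono : Monotone Γ) (hΓ0 : Γ 0 = 0)
    (hlim : Tendsto (fun n : ℕ => Γ n / (n : ℝ)) atTop (nhds 1))
    (α β : ℝ) (hα0 : 0 < α) (hα1 : α < 1) (hβ : 1 / 2 < β) :
    Tendsto (fun n : ℕ => (n : ℝ) ^ (α / 2) *
        ⨆ t : Set.Icc (0 : ℝ) ((n : ℝ) ^ (-β)),
          |(Γ ⌊(n : ℝ) * (t : ℝ)⌋₊ / (n : ℝ)) ^ α - (t : ℝ) ^ α|)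
      atTop (nhds 0) := by
  -- Step 1: a linear bound Γ m ≤ C + 2 m.
  obtain ⟨N, hN⟩ : ∃ N : ℕ, ∀ m ≥ N, Γ m / (m : ℝ) ≤ 2 := by
    have h := hlim.eventually (eventually_le_nhds (by norm_num : (1:ℝ) < 2))
    exact eventually_atTop.mp h
  set C : ℝ := Γ N with hCdef
  have hC0 : 0 ≤ C := hnonneg N
  have hC : ∀ m : ℕ, Γ m ≤ C + 2 * m := by
    intro m
    rcases le_or_gt m N with hm | hm
    · have := hmono hm
      have : (0:ℝ) ≤ (m:ℝ) := Nat.cast_nonneg m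
      nlinarith [hmono hm]
    · have hm1 : (0:ℝ) < (m:ℝ) := by exact_mod_cast lt_of_le_of_lt (Nat.zero_le N) hm
      have := hN m hm.le
      have h2 : Γ m ≤ 2 * m := by
        rw [div_le_iff₀ hm1] at this; linarith
      linarith
  -- The dominating sequence.
  set g : ℕ → ℝ := fun n =>
    (C * (n:ℝ) ^ (-(1/2) : ℝ) + 2 * (n:ℝ) ^ ((1:ℝ)/2 - β)) ^ α
      + ((n:ℝ) ^ ((1:ℝ)/2 - β)) ^ α with hgdef
  have hrpow0 : ∀ {u : ℕ → ℝ}, Tendsto u atTop (nhds 0) →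
      Tendsto (fun n => (u n) ^ α) atTop (nhds 0) := by
    intro u hu
    have hc : ContinuousAt (fun x : ℝ => x ^ α) 0 :=
      Real.continuousAt_rpow_const 0 α (Or.inr hα0.le)
    have := hc.tendsto.comp hu
    simpa [Function.comp_def, Real.zero_rpow hα0.ne'] using this
  have h1 : Tendsto (fun n : ℕ => (n:ℝ) ^ (-(1/2) : ℝ)) atTop (nhds 0) :=
    (tendsto_rpow_neg_atTop (by norm_num)).comp tendsto_natCast_atTop_atTop
  have h2 : Tendsto (fun n : ℕ => (n:ℝ) ^ ((1:ℝ)/2 - β)) atTop (nhds 0) := by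
    have : ((1:ℝ)/2 - β) = -(β - 1/2) := by ring
    rw [this]
    exact (tendsto_rpow_neg_atTop (by linarith)).comp tendsto_natCast_atTop_atTop
  have hg : Tendsto g atTop (nhds 0) := by
    have hu : Tendsto (fun n : ℕ =>
        C * (n:ℝ) ^ (-(1/2) : ℝ) + 2 * (n:ℝ) ^ ((1:ℝ)/2 - β)) atTop (nhds 0) := by
      simpa using (h1.const_mul C).add (h2.const_mul 2)
    simpa only [add_zero] using (hrpow0 hu).add (hrpow0 h2)
  -- Squeeze.
  apply squeeze_zero' _ _ hg
  · filter_upwards with n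
    exact mul_nonneg (Real.rpow_nonneg (Nat.cast_nonneg n) _)
      (Real.iSup_nonneg fun t => abs_nonneg _)
  · filter_upwards [eventually_ge_atTop 1] with n hn
    have hn0 : (0:ℝ) < (n:ℝ) := by exact_mod_cast hn
    set A : ℝ := C * (n:ℝ) ^ (-1 : ℝ) + 2 * (n:ℝ) ^ (-β) with hAdef
    set B : ℝ := (n:ℝ) ^ (-β) with hBdef
    have hB0 : 0 ≤ B := Real.rpow_nonneg hn0.le _
    have hA0 : 0 ≤ A := by
      have : (0:ℝ) ≤ (n:ℝ) ^ (-1 : ℝ) := Real.rpow_nonneg hn0.le _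
      positivity
    have hsup : (⨆ t : Set.Icc (0 : ℝ) ((n : ℝ) ^ (-β)),
          |(Γ ⌊(n : ℝ) * (t : ℝ)⌋₊ / (n : ℝ)) ^ α - (t : ℝ) ^ α|)
        ≤ A ^ α + B ^ α := by
      apply Real.iSup_le _ (add_nonneg (Real.rpow_nonneg hA0 _) (Real.rpow_nonneg hB0 _))
      rintro ⟨t, ht0, ht1⟩
      simp only
      set m : ℕ := ⌊(n:ℝ) * t⌋₊ with hmdef
      have hx0 : 0 ≤ Γ m / (n:ℝ) := div_nonneg (hnonneg m) hn0.le
      have hxA : Γ m / (n:ℝ) ≤ A := by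
        have hmle : (m:ℝ) ≤ (n:ℝ) * t := Nat.floor_le (mul_nonneg hn0.le ht0)
        have hΓm : Γ m ≤ C + 2 * ((n:ℝ) * B) := by
          have := hC m
          have h' : (m:ℝ) ≤ (n:ℝ) * B :=
            hmle.trans (mul_le_mul_of_nonneg_left ht1 hn0.le)
          linarith
        rw [hAdef, Real.rpow_neg_one]
        rw [div_le_iff₀ hn0]
        have hinv : (n:ℝ)⁻¹ * (n:ℝ) = 1 := inv_mul_cancel₀ hn0.ne'
        calc Γ m ≤ C + 2 * ((n:ℝ) * B) := hΓm
          _ = (C * (n:ℝ)⁻¹ + 2 * B) * (n:ℝ) := by field_simp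
      have habs : |(Γ m / (n:ℝ)) ^ α - t ^ α| ≤ (Γ m / (n:ℝ)) ^ α + t ^ α := by
        have := abs_sub (((Γ m / (n:ℝ)) ^ α)) (t ^ α)
        rwa [abs_of_nonneg (Real.rpow_nonneg hx0 _),
          abs_of_nonneg (Real.rpow_nonneg ht0 _)] at this
      refine habs.trans (add_le_add ?_ ?_)
      · exact Real.rpow_le_rpow hx0 hxA hα0.le
      · exact Real.rpow_le_rpow ht0 ht1 hα0.le
    calc (n : ℝ) ^ (α / 2) *
        ⨆ t : Set.Icc (0 : ℝ) ((n : ℝ) ^ (-β)),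
          |(Γ ⌊(n : ℝ) * (t : ℝ)⌋₊ / (n : ℝ)) ^ α - (t : ℝ) ^ α|
        ≤ (n : ℝ) ^ (α / 2) * (A ^ α + B ^ α) :=
          mul_le_mul_of_nonneg_left hsup (Real.rpow_nonneg hn0.le _)
      _ = g n := by
          have e0 : (n:ℝ) ^ (α / 2) = ((n:ℝ) ^ ((1:ℝ)/2)) ^ α := by
            rw [← Real.rpow_mul hn0.le]; congr 1; ring
          have eh : (0:ℝ) ≤ (n:ℝ) ^ ((1:ℝ)/2) := Real.rpow_nonneg hn0.le _
          have e2 : (n:ℝ) ^ ((1:ℝ)/2) * ((n:ℝ) ^ (-1 : ℝ)) = (n:ℝ) ^ (-(1/2) : ℝ) := by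
            rw [← Real.rpow_add hn0]; norm_num
          have e3 : (n:ℝ) ^ ((1:ℝ)/2) * (n:ℝ) ^ (-β) = (n:ℝ) ^ ((1:ℝ)/2 - β) := by
            rw [← Real.rpow_add hn0]; ring_nf
          have eA : (n:ℝ) ^ ((1:ℝ)/2) * A
              = C * (n:ℝ) ^ (-(1/2) : ℝ) + 2 * (n:ℝ) ^ ((1:ℝ)/2 - β) := by
            calc (n:ℝ) ^ ((1:ℝ)/2) * A
                = C * ((n:ℝ) ^ ((1:ℝ)/2) * (n:ℝ) ^ (-1 : ℝ))
                  + 2 * ((n:ℝ) ^ ((1:ℝ)/2) * (n:ℝ) ^ (-β)) := by rw [hAdef]; ring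
              _ = _ := by rw [e2, e3]
          have eB : (n:ℝ) ^ ((1:ℝ)/2) * B = (n:ℝ) ^ ((1:ℝ)/2 - β) := by
            rw [hBdef, e3]
          rw [e0, mul_add, ← Real.mul_rpow eh hA0, ← Real.mul_rpow eh hB0, eA, eB]
end

section
/- Large-time estimate in the de-Poissonization step (equation (eq:An)), deterministic form under a law-of-the-iterated-logarithm bound: let α ∈ (0,1) and let β > 1/2, with additionally β < (1-α)/(1-2α) in the case α < 1/2. Let Γ : ℕ → [0, ∞) be nondecreasing with Γ_0 = 0, and suppose there exist constants C > 0 and n₀ ≥ 3 such that |Γ_n - n| ≤ C (n log log n)^{1/2} for all n ≥ n₀. Then lim_{n→∞} n^{α/2} sup_{t ∈ [n^{-β}, 1]} | (Γ_{⌊n t⌋} / n)^α - t^α | = 0. -/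
open Filter Set



lemma aux_rpow_sub_le {α a b : ℝ} (hα1 : α < 1)
    (ha : 0 < a) (hab : a ≤ b) : b ^ α - a ^ α ≤ a ^ (α - 1) * (b - a) := by
  have hb : 0 < b := lt_of_lt_of_le ha hab
  have h1 : b ^ α * a ^ (1 - α) ≤ b := by
    calc b ^ α * a ^ (1-α) ≤ b ^ α * b ^ (1-α) := by
          have := Real.rpow_le_rpow ha.le hab (by linarith : (0:ℝ) ≤ 1 - α)
          exact mul_le_mul_of_nonneg_left this (Real.rpow_nonneg hb.le α)
      _ = b ^ (α + (1-α)) := (Real.rpow_add hb _ _).symm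
      _ = b := by norm_num
  have h2 : b ^ α ≤ b * a ^ (α - 1) := by
    have h := mul_le_mul_of_nonneg_right h1 (Real.rpow_pos_of_pos ha (α-1)).le
    calc b ^ α = b ^ α * a ^ (1-α) * a ^ (α-1) := by
          rw [mul_assoc, ← Real.rpow_add ha]; norm_num
      _ ≤ b * a ^ (α-1) := h
  have h3 : a ^ α = a * a ^ (α - 1) := by
    have h := Real.rpow_add ha 1 (α-1)
    rw [Real.rpow_one] at h
    norm_num at h
    exact h
  nlinarith [h2, h3]

lemma aux_abs_rpow_sub_rpow {α x y : ℝ} (hα0 : 0 < α) (hα1 : α < 1)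
    (hx : 0 ≤ x) (hy : 0 < y) :
    |x ^ α - y ^ α| ≤ 2 * y ^ (α - 1) * |x - y| := by
  have hyp : 0 ≤ y ^ (α - 1) := Real.rpow_nonneg hy.le _
  rcases le_or_gt y x with hxy | hxy
  · have h1 : y ^ α ≤ x ^ α := Real.rpow_le_rpow hy.le hxy hα0.le
    rw [abs_of_nonneg (by linarith), abs_of_nonneg (by linarith)]
    have := aux_rpow_sub_le hα1 hy hxy
    nlinarith
  · have h1 : x ^ α ≤ y ^ α := Real.rpow_le_rpow hx hxy.le hα0.le
    rw [abs_of_nonpos (by linarith), abs_of_nonpos (by linarith), neg_sub, neg_sub]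
    rcases le_or_gt (y/2) x with hx2 | hx2
    · have hx0 : 0 < x := lt_of_lt_of_le (by linarith) hx2
      have h2 := aux_rpow_sub_le hα1 hx0 hxy.le
      have h3 : x ^ (α-1) ≤ (y/2) ^ (α-1) :=
        Real.rpow_le_rpow_of_nonpos (by linarith) hx2 (by linarith)
      have h4 : (y/2) ^ (α-1) ≤ 2 * y ^ (α-1) := by
        have : (y/2) ^ (α-1) = y ^ (α-1) * (2:ℝ) ^ (1-α) := by
          rw [div_eq_mul_inv, Real.mul_rpow hy.le (by norm_num),
            Real.inv_rpow (by norm_num), ← Real.rpow_neg (by norm_num)]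
          ring_nf
        rw [this]
        have h5 : (2:ℝ) ^ (1-α) ≤ 2 := by
          calc (2:ℝ) ^ (1-α) ≤ (2:ℝ) ^ (1:ℝ) :=
                Real.rpow_le_rpow_of_exponent_le one_le_two (by linarith)
            _ = 2 := Real.rpow_one 2
        nlinarith
      nlinarith
    · have h5 : y ^ α = y * y ^ (α-1) := by
        have h := Real.rpow_add hy 1 (α-1)
        rw [Real.rpow_one] at h
        norm_num at h
        exact h
      have h6 : 0 ≤ x ^ α := Real.rpow_nonneg hx _
      have h7 : y ≤ 2 * (y - x) := by linarith
      nlinarith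



lemma aux_tendsto {e : ℝ} (he : e < 0) :
    Tendsto (fun n : ℕ => (Real.log (Real.log n)) ^ ((1:ℝ)/2) * (n:ℝ) ^ e)
      atTop (nhds 0) := by
  have hc : (0:ℝ) ≤ ((-e) ^ ((1:ℝ)/2))⁻¹ :=
    inv_nonneg.mpr (Real.rpow_nonneg (by linarith) _)
  apply squeeze_zero' (g := fun n : ℕ => ((-e) ^ ((1:ℝ)/2))⁻¹ * (n:ℝ) ^ (e/2))
  · filter_upwards [eventually_ge_atTop 3] with n hn
    have hn3 : (3:ℝ) ≤ n := by exact_mod_cast hn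
    have h1 : (1:ℝ) ≤ Real.log n := by
      rw [Real.le_log_iff_exp_le (by linarith)]
      have := Real.exp_one_lt_d9; linarith
    have h2 : 0 ≤ Real.log (Real.log n) := Real.log_nonneg h1
    positivity
  · filter_upwards [eventually_ge_atTop 3] with n hn
    have hn3 : (3:ℝ) ≤ n := by exact_mod_cast hn
    have hn0 : (0:ℝ) < n := by linarith
    have h1 : (1:ℝ) ≤ Real.log n := by
      rw [Real.le_log_iff_exp_le hn0]
      have := Real.exp_one_lt_d9; linarith
    have h2 : 0 ≤ Real.log (Real.log n) := Real.log_nonneg h1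
    have h3 : Real.log (Real.log n) ≤ (n:ℝ) ^ (-e) / (-e) := by
      calc Real.log (Real.log n) ≤ Real.log n := Real.log_le_self (by linarith)
        _ ≤ (n:ℝ) ^ (-e) / (-e) := Real.log_le_rpow_div hn0.le (by linarith)
    have h4 : (Real.log (Real.log n)) ^ ((1:ℝ)/2)
        ≤ ((n:ℝ) ^ (-e) / (-e)) ^ ((1:ℝ)/2) :=
      Real.rpow_le_rpow h2 h3 (by norm_num)
    have h5 : ((n:ℝ) ^ (-e) / (-e)) ^ ((1:ℝ)/2)
        = ((-e) ^ ((1:ℝ)/2))⁻¹ * (n:ℝ) ^ (-e/2) := by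
      rw [Real.div_rpow (Real.rpow_nonneg hn0.le _) (by linarith),
        ← Real.rpow_mul hn0.le, div_eq_mul_inv, mul_comm]
      congr 2
      ring
    have h6 : (n:ℝ) ^ (-e/2) * (n:ℝ) ^ e = (n:ℝ) ^ (e/2) := by
      rw [← Real.rpow_add hn0]; congr 1; ring
    calc Real.log (Real.log n) ^ ((1:ℝ)/2) * (n:ℝ) ^ e
        ≤ (((-e) ^ ((1:ℝ)/2))⁻¹ * (n:ℝ) ^ (-e/2)) * (n:ℝ) ^ e := by
          rw [← h5]
          exact mul_le_mul_of_nonneg_right h4 (Real.rpow_nonneg hn0.le _)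
      _ = ((-e) ^ ((1:ℝ)/2))⁻¹ * (n:ℝ) ^ (e/2) := by rw [mul_assoc, h6]
  · have h2 : Tendsto (fun n : ℕ => (n:ℝ) ^ (e/2)) atTop (nhds 0) := by
      have := (tendsto_rpow_neg_atTop (show (0:ℝ) < -(e/2) by linarith)).comp
        tendsto_natCast_atTop_atTop
      simpa [Function.comp_def] using this
    simpa using h2.const_mul ((-e) ^ ((1:ℝ)/2))⁻¹
set_option maxHeartbeats 2000000

/-- **Large-time estimate in the de-Poissonization step** (equation (eq:An)),
deterministic form under a law-of-the-iterated-logarithm bound: let `α ∈ (0,1)`,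
`β > 1/2`, with additionally `β < (1-α)/(1-2α)` when `α < 1/2`. If `Γ : ℕ → [0,∞)` is
nondecreasing with `Γ 0 = 0` and `|Γ n - n| ≤ C (n log log n)^{1/2}` for all `n ≥ n₀`
(for some `C > 0`, `n₀ ≥ 3`), then
`n^{α/2} sup_{t ∈ [n^{-β}, 1]} |(Γ_{⌊nt⌋}/n)^α - t^α| → 0`. -/
theorem large_time_estimate (Γ : ℕ → ℝ) (hnonneg : ∀ n, 0 ≤ Γ n)
    (hmono : Monotone Γ) (hΓ0 : Γ 0 = 0)
    (α β : ℝ) (hα0 : 0 < α) (hα1 : α < 1) (hβ : 1 / 2 < β)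
    (hβ' : α < 1 / 2 → β < (1 - α) / (1 - 2 * α))
    (C : ℝ) (hC : 0 < C) (n₀ : ℕ) (hn₀ : 3 ≤ n₀)
    (hLIL : ∀ n : ℕ, n₀ ≤ n →
      |Γ n - (n : ℝ)| ≤ C * ((n : ℝ) * Real.log (Real.log (n : ℝ))) ^ ((1 : ℝ) / 2)) :
    Tendsto (fun n : ℕ => (n : ℝ) ^ (α / 2) *
        ⨆ t : Set.Icc ((n : ℝ) ^ (-β)) 1,
          |(Γ ⌊(n : ℝ) * (t : ℝ)⌋₊ / (n : ℝ)) ^ α - (t : ℝ) ^ α|)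
      atTop (nhds 0) := by
  set e : ℝ := (α - 1) / 2 + max 0 (β * (1/2 - α)) with he_def
  have hmax0 : 0 ≤ max 0 (β * (1/2 - α)) := le_max_left _ _
  have hβ0 : 0 < β := by linarith
  have he : e < 0 := by
    rcases le_or_gt (1/2 : ℝ) α with h | h
    · have hm : max 0 (β * (1/2 - α)) = 0 := max_eq_left (by nlinarith)
      rw [he_def, hm]; linarith
    · have hb' := hβ' h
      have h2 : (0:ℝ) < 1 - 2 * α := by linarith
      have h3 : β * (1 - 2 * α) < 1 - α := (lt_div_iff₀ h2).mp hb'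
      have hm : max 0 (β * (1/2 - α)) = β * (1/2 - α) := max_eq_right (by nlinarith)
      rw [he_def, hm]; nlinarith
  set K : ℝ := max (Γ n₀) ((n₀:ℝ) + 1) with hK_def
  have hK1 : 1 ≤ K := by
    have h0 : (0:ℝ) ≤ (n₀:ℝ) := Nat.cast_nonneg _
    exact le_trans (by linarith) (le_max_right _ _)
  have hK0 : 0 < K := by linarith
  have hKα : 0 ≤ K ^ α := Real.rpow_nonneg hK0.le _
  apply squeeze_zero' (g := fun n : ℕ => (K ^ α + 2) * (n:ℝ) ^ (-(α/2)) +
    (2 * C) * ((Real.log (Real.log n)) ^ ((1:ℝ)/2) * (n:ℝ) ^ e))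
  · filter_upwards with n
    exact mul_nonneg (Real.rpow_nonneg (Nat.cast_nonneg n) _)
      (Real.iSup_nonneg fun t => abs_nonneg _)
  · filter_upwards [eventually_ge_atTop n₀] with n hn
    have hn3 : 3 ≤ n := le_trans hn₀ hn
    have hn3R : (3:ℝ) ≤ n := by exact_mod_cast hn3
    have hn0 : (0:ℝ) < n := by linarith
    have hn1 : (1:ℝ) ≤ n := by linarith
    have hlogn : 1 ≤ Real.log n := by
      rw [Real.le_log_iff_exp_le hn0]
      have := Real.exp_one_lt_d9; linarith
    have hL0 : 0 ≤ Real.log (Real.log n) := Real.log_nonneg hlogn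
    have hLh : 0 ≤ (Real.log (Real.log n)) ^ ((1:ℝ)/2) := Real.rpow_nonneg hL0 _
    have hps : (0:ℝ) < (n:ℝ) ^ (α/2) := Real.rpow_pos_of_pos hn0 _
    have hnegp : 0 ≤ (n:ℝ) ^ (-(α/2)) := Real.rpow_nonneg hn0.le _
    have hne : Nonempty (Set.Icc ((n:ℝ) ^ (-β)) 1) :=
      ⟨⟨1, ⟨Real.rpow_le_one_of_one_le_of_nonpos hn1 (by linarith), le_refl 1⟩⟩⟩
    rw [mul_comm, ← le_div_iff₀ hps]
    apply ciSup_le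
    rintro ⟨t, ht1, ht2⟩
    rw [le_div_iff₀ hps, mul_comm]
    have ht0 : 0 < t := lt_of_lt_of_le (Real.rpow_pos_of_pos hn0 _) ht1
    set m := ⌊(n:ℝ) * t⌋₊ with hm
    have hnt0 : 0 ≤ (n:ℝ) * t := by positivity
    have hmle : (m:ℝ) ≤ (n:ℝ) * t := Nat.floor_le hnt0
    have hmgt : (n:ℝ) * t < m + 1 := Nat.lt_floor_add_one _
    have hx0 : 0 ≤ Γ m / n := div_nonneg (hnonneg m) hn0.le
    by_cases hcase : (n₀:ℝ) ≤ (n:ℝ) * t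
    · -- case B : n*t ≥ n₀
      have hm0 : n₀ ≤ m := Nat.le_floor hcase
      have hn₀3R : (3:ℝ) ≤ (n₀:ℝ) := by exact_mod_cast hn₀
      have hm3R : (3:ℝ) ≤ m := by
        have : (n₀:ℝ) ≤ m := by exact_mod_cast hm0
        linarith
      have hmlen : (m:ℝ) ≤ n := by nlinarith
      have hlogm : 1 ≤ Real.log m := by
        rw [Real.le_log_iff_exp_le (by linarith)]
        have := Real.exp_one_lt_d9; linarith
      have hll : Real.log (Real.log m) ≤ Real.log (Real.log n) :=
        Real.log_le_log (by linarith) (Real.log_le_log (by linarith) hmlen)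
      have hprod : (m:ℝ) * Real.log (Real.log m) ≤ ((n:ℝ) * t) * Real.log (Real.log n) :=
        mul_le_mul hmle hll (Real.log_nonneg hlogm) hnt0
      have hLIL2 : |Γ m - m| ≤ C * (((n:ℝ) * t) * Real.log (Real.log n)) ^ ((1:ℝ)/2) := by
        refine (hLIL m hm0).trans ?_
        refine mul_le_mul_of_nonneg_left (Real.rpow_le_rpow ?_ hprod (by norm_num)) hC.le
        exact mul_nonneg (by linarith) (Real.log_nonneg hlogm)
      have hexp : (((n:ℝ) * t) * Real.log (Real.log n)) ^ ((1:ℝ)/2)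
          = (n:ℝ) ^ ((1:ℝ)/2) * t ^ ((1:ℝ)/2) * (Real.log (Real.log n)) ^ ((1:ℝ)/2) := by
        rw [Real.mul_rpow hnt0 hL0, Real.mul_rpow hn0.le ht0.le]
      have hflr : |(m:ℝ) - (n:ℝ) * t| ≤ 1 := abs_le.mpr ⟨by linarith, by linarith⟩
      have hdiff : |Γ m / n - t| ≤
          (C * ((n:ℝ) ^ ((1:ℝ)/2) * t ^ ((1:ℝ)/2) * (Real.log (Real.log n)) ^ ((1:ℝ)/2)) + 1)
            / n := by
        have h1 : Γ m / n - t = (Γ m - (n:ℝ) * t) / n := by field_simp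
        rw [h1, abs_div, abs_of_pos hn0]
        gcongr
        calc |Γ m - (n:ℝ) * t| ≤ |Γ m - (m:ℝ)| + |(m:ℝ) - (n:ℝ) * t| := abs_sub_le _ _ _
          _ ≤ C * (((n:ℝ) * t) * Real.log (Real.log n)) ^ ((1:ℝ)/2) + 1 :=
              add_le_add hLIL2 hflr
          _ = C * ((n:ℝ) ^ ((1:ℝ)/2) * t ^ ((1:ℝ)/2)
                * (Real.log (Real.log n)) ^ ((1:ℝ)/2)) + 1 := by rw [hexp]
      have hkey := aux_abs_rpow_sub_rpow hα0 hα1 hx0 ht0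
      have htp : 0 ≤ t ^ (α - 1) := Real.rpow_nonneg ht0.le _
      have hA : (n:ℝ) ^ (α/2) * (n:ℝ) ^ ((1:ℝ)/2) / n = (n:ℝ) ^ ((α-1)/2) := by
        rw [div_eq_iff hn0.ne', ← Real.rpow_add hn0, ← Real.rpow_add_one hn0.ne']
        congr 1; ring
      have hB : t ^ (α-1) * t ^ ((1:ℝ)/2) = t ^ (α - (1:ℝ)/2) := by
        rw [← Real.rpow_add ht0]; congr 1; ring
      have hC2 : (n:ℝ) ^ ((α-1)/2) * (n:ℝ) ^ (max 0 (β * (1/2 - α))) = (n:ℝ) ^ e := by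
        rw [he_def, ← Real.rpow_add hn0]
      have p1 : t ^ (α - (1:ℝ)/2) ≤ (n:ℝ) ^ (max 0 (β * (1/2 - α))) := by
        rcases le_or_gt (1/2 : ℝ) α with h | h
        · calc t ^ (α - (1:ℝ)/2) ≤ 1 := Real.rpow_le_one ht0.le ht2 (by linarith)
            _ ≤ (n:ℝ) ^ (max 0 (β * (1/2 - α))) := Real.one_le_rpow hn1 hmax0
        · have hmx : max 0 (β * (1/2 - α)) = β * (1/2 - α) := max_eq_right (by nlinarith)
          calc t ^ (α - (1:ℝ)/2) ≤ ((n:ℝ) ^ (-β)) ^ (α - (1:ℝ)/2) :=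
              Real.rpow_le_rpow_of_nonpos (Real.rpow_pos_of_pos hn0 _) ht1 (by linarith)
            _ = (n:ℝ) ^ (β * (1/2 - α)) := by
              rw [← Real.rpow_mul hn0.le]; congr 1; ring
            _ = (n:ℝ) ^ (max 0 (β * (1/2 - α))) := by rw [hmx]
      have htn : 1/(n:ℝ) ≤ t := by
        rw [div_le_iff₀ hn0]
        nlinarith
      have p3 : t ^ (α-1) ≤ (1/(n:ℝ)) ^ (α-1) :=
        Real.rpow_le_rpow_of_nonpos (by positivity) htn (by linarith)
      have p4 : (1/(n:ℝ)) ^ (α-1) = (n:ℝ) ^ (-(α-1)) := by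
        rw [one_div, Real.inv_rpow hn0.le, ← Real.rpow_neg hn0.le]
      have hD : (n:ℝ) ^ (α/2) * (n:ℝ) ^ (-(α-1)) / n = (n:ℝ) ^ (-(α/2)) := by
        rw [div_eq_iff hn0.ne', ← Real.rpow_add hn0, ← Real.rpow_add_one hn0.ne']
        congr 1; ring
      have h9 : 0 ≤ K ^ α * (n:ℝ) ^ (-(α/2)) := mul_nonneg hKα hnegp
      calc (n:ℝ) ^ (α/2) * |(Γ m / n) ^ α - t ^ α|
          ≤ (n:ℝ) ^ (α/2) * (2 * t ^ (α-1) *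
              ((C * ((n:ℝ) ^ ((1:ℝ)/2) * t ^ ((1:ℝ)/2)
                * (Real.log (Real.log n)) ^ ((1:ℝ)/2)) + 1) / n)) := by
            refine mul_le_mul_of_nonneg_left (hkey.trans ?_) hps.le
            exact mul_le_mul_of_nonneg_left hdiff (by positivity)
        _ = (2 * C) * ((Real.log (Real.log n)) ^ ((1:ℝ)/2) *
              (((n:ℝ) ^ (α/2) * (n:ℝ) ^ ((1:ℝ)/2) / n) * (t ^ (α-1) * t ^ ((1:ℝ)/2)))) +
            2 * ((n:ℝ) ^ (α/2) * t ^ (α-1) / n) := by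
            field_simp
        _ = (2 * C) * ((Real.log (Real.log n)) ^ ((1:ℝ)/2) *
              ((n:ℝ) ^ ((α-1)/2) * t ^ (α - (1:ℝ)/2))) +
            2 * ((n:ℝ) ^ (α/2) * t ^ (α-1) / n) := by rw [hA, hB]
        _ ≤ (2 * C) * ((Real.log (Real.log n)) ^ ((1:ℝ)/2) *
              ((n:ℝ) ^ ((α-1)/2) * (n:ℝ) ^ (max 0 (β * (1/2 - α))))) +
            2 * ((n:ℝ) ^ (α/2) * ((1/(n:ℝ)) ^ (α-1)) / n) := by
            refine add_le_add ?_ ?_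
            · refine mul_le_mul_of_nonneg_left ?_ (by linarith)
              refine mul_le_mul_of_nonneg_left ?_ hLh
              exact mul_le_mul_of_nonneg_left p1 (Real.rpow_nonneg hn0.le _)
            · refine mul_le_mul_of_nonneg_left ?_ (by norm_num)
              gcongr
        _ = (2 * C) * ((Real.log (Real.log n)) ^ ((1:ℝ)/2) * (n:ℝ) ^ e) +
            2 * (n:ℝ) ^ (-(α/2)) := by rw [hC2, p4, hD]
        _ ≤ (K ^ α + 2) * (n:ℝ) ^ (-(α/2)) +
            (2 * C) * ((Real.log (Real.log n)) ^ ((1:ℝ)/2) * (n:ℝ) ^ e) := by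
            nlinarith [mul_nonneg hKα hnegp]
    · -- case A : n*t < n₀
      push_neg at hcase
      have hmlt : m < n₀ := by
        rw [hm]
        exact (Nat.floor_lt hnt0).mpr hcase
      have hΓK : Γ m ≤ K := le_trans (hmono hmlt.le) (le_max_left _ _)
      have hn₀K : (n₀:ℝ) ≤ K := by
        have : (n₀:ℝ) + 1 ≤ K := le_max_right _ _
        linarith
      have hxK : Γ m / n ≤ K / n := by gcongr
      have htK : t ≤ K / n := by
        rw [le_div_iff₀ hn0]
        calc t * n = n * t := by ring
          _ ≤ (n₀:ℝ) := hcase.le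
          _ ≤ K := hn₀K
      have b1 : (Γ m / n) ^ α ≤ (K / n) ^ α := Real.rpow_le_rpow hx0 hxK hα0.le
      have b2 : t ^ α ≤ (K / n) ^ α := Real.rpow_le_rpow ht0.le htK hα0.le
      have b3 : 0 ≤ (Γ m / n) ^ α := Real.rpow_nonneg hx0 _
      have b4 : 0 ≤ t ^ α := Real.rpow_nonneg ht0.le _
      have habs : |(Γ m / n) ^ α - t ^ α| ≤ (K / n) ^ α :=
        abs_sub_le_iff.mpr ⟨by linarith, by linarith⟩
      have h7 : (n:ℝ) ^ (α/2) * ((K / n) ^ α) = K ^ α * ((n:ℝ) ^ (α/2) * ((n:ℝ) ^ α)⁻¹) := by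
        rw [Real.div_rpow hK0.le hn0.le]; ring
      have h8 : (n:ℝ) ^ (α/2) * ((n:ℝ) ^ α)⁻¹ = (n:ℝ) ^ (-(α/2)) := by
        rw [← Real.rpow_neg hn0.le, ← Real.rpow_add hn0]; congr 1; ring
      have hterm2 : 0 ≤ (2 * C) * ((Real.log (Real.log n)) ^ ((1:ℝ)/2) * (n:ℝ) ^ e) :=
        mul_nonneg (by linarith) (mul_nonneg hLh (Real.rpow_nonneg hn0.le _))
      calc (n:ℝ) ^ (α/2) * |(Γ m / n) ^ α - t ^ α|
          ≤ (n:ℝ) ^ (α/2) * (K / n) ^ α := mul_le_mul_of_nonneg_left habs hps.le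
        _ = K ^ α * (n:ℝ) ^ (-(α/2)) := by rw [h7, h8]
        _ ≤ (K ^ α + 2) * (n:ℝ) ^ (-(α/2)) +
            (2 * C) * ((Real.log (Real.log n)) ^ ((1:ℝ)/2) * (n:ℝ) ^ e) := by
            have h9 : 0 ≤ K ^ α * (n:ℝ) ^ (-(α/2)) := mul_nonneg hKα hnegp
            nlinarith
  · have t1 : Tendsto (fun n : ℕ => (n:ℝ) ^ (-(α/2))) atTop (nhds 0) :=
      (tendsto_rpow_neg_atTop (by linarith : (0:ℝ) < α/2)).comp tendsto_natCast_atTop_atTop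
    have t2 := aux_tendsto he
    simpa using (t1.const_mul (K ^ α + 2)).add (t2.const_mul (2 * C))
end

section
/- Negligibility of the centering discrepancy in the de-Poissonization (the claim lim_n ŵd_n = 0 almost surely, equation (eq:center diff)): for every α ∈ (0,1), almost surely lim_{n→∞} n^{α/2} sup_{t ∈ [0,1]} | (Γ_{⌊n t⌋} / n)^α - t^α | = 0; equivalently, sup_{t ∈ [0,1]} | (n λ_n(t))^α - (n t)^α | = o(n^{α/2}) almost surely, where λ_n(t) = Γ_{⌊n t⌋}/n. -/
open MeasureTheory ProbabilityTheory Filter Real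
open scoped ENNReal NNReal

/-- Arrival times of the standard Poisson process: `Γ_j = E_1 + ⋯ + E_j` (`Γ_0 = 0`). -/
noncomputable def arrival {Ω : Type*} (E : ℕ → Ω → ℝ) (j : ℕ) (ω : Ω) : ℝ :=
  ∑ k ∈ Finset.range j, E k ω

/-! ### Elementary inequalities for real powers -/

lemma add_rpow_le' {α x y : ℝ} (hα0 : 0 < α) (hα1 : α ≤ 1) (hx : 0 ≤ x) (hy : 0 ≤ y) :
    (x + y) ^ α ≤ x ^ α + y ^ α := by
  rcases (add_nonneg hx hy).eq_or_lt with h | hs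
  · have hx0 : x = 0 := by linarith
    have hy0 : y = 0 := by linarith
    simp [hx0, hy0, Real.zero_rpow hα0.ne']
  · have key : ∀ z : ℝ, 0 ≤ z → z ≤ x + y → z / (x + y) ≤ (z / (x + y)) ^ α := by
      intro z hz hzs
      rcases hz.eq_or_lt with h0 | h0
      · simp [← h0, Real.zero_rpow hα0.ne']
      · have h1 : 0 < z / (x + y) := div_pos h0 hs
        have h2 : z / (x + y) ≤ 1 := (div_le_one hs).2 hzs
        simpa using Real.rpow_le_rpow_of_exponent_ge h1 h2 hα1
    have h1 := key x hx (by linarith)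
    have h2 := key y hy (by linarith)
    have h3 : (x / (x + y)) ^ α + (y / (x + y)) ^ α = (x ^ α + y ^ α) / (x + y) ^ α := by
      rw [Real.div_rpow hx hs.le, Real.div_rpow hy hs.le, ← add_div]
    have h4 : x / (x + y) + y / (x + y) = 1 := by field_simp
    have h5 : (1 : ℝ) ≤ (x ^ α + y ^ α) / (x + y) ^ α := by
      rw [← h3, ← h4]; exact add_le_add h1 h2
    have h6 : (0 : ℝ) < (x + y) ^ α := Real.rpow_pos_of_pos hs α
    calc (x + y) ^ α = 1 * (x + y) ^ α := (one_mul _).symm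
      _ ≤ (x ^ α + y ^ α) / (x + y) ^ α * (x + y) ^ α := by gcongr
      _ = x ^ α + y ^ α := by field_simp

lemma abs_rpow_sub_rpow_le {α : ℝ} (hα0 : 0 < α) (hα1 : α ≤ 1)
    {x y : ℝ} (hx : 0 ≤ x) (hy : 0 ≤ y) : |x ^ α - y ^ α| ≤ |x - y| ^ α := by
  have key : ∀ a b : ℝ, 0 ≤ b → b ≤ a → a ^ α - b ^ α ≤ (a - b) ^ α := by
    intro a b hb hba
    have := add_rpow_le' hα0 hα1 hb (sub_nonneg.2 hba)
    rw [add_sub_cancel] at this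
    linarith
  rcases le_total y x with h | h
  · rw [abs_of_nonneg (sub_nonneg.2 h), abs_of_nonneg (sub_nonneg.2 (Real.rpow_le_rpow hy h hα0.le))]
    exact key x y hy h
  · rw [abs_of_nonpos (sub_nonpos.2 h), abs_of_nonpos (sub_nonpos.2 (Real.rpow_le_rpow hx h hα0.le)),
      neg_sub, neg_sub]
    exact key y x hx h

lemma abs_rpow_sub_rpow_le' {α m : ℝ} (hα0 : 0 < α) (hα1 : α ≤ 1) (hm : 0 < m)
    {x y : ℝ} (hx : m ≤ x) (hy : m ≤ y) : |x ^ α - y ^ α| ≤ m ^ (α - 1) * |x - y| := by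
  have key : ∀ a b : ℝ, m ≤ b → b ≤ a → a ^ α - b ^ α ≤ m ^ (α - 1) * (a - b) := by
    intro a b hb hba
    have hb0 : 0 < b := lt_of_lt_of_le hm hb
    have ha0 : 0 < a := lt_of_lt_of_le hb0 hba
    have h1 : (a / b) ^ α ≤ a / b := by
      calc (a / b) ^ α ≤ (a / b) ^ (1 : ℝ) :=
        Real.rpow_le_rpow_of_exponent_le ((one_le_div hb0).2 hba) hα1
      _ = a / b := Real.rpow_one _
    have h2 : a ^ α ≤ b ^ α * (a / b) := by
      calc a ^ α = (b * (a / b)) ^ α := by rw [mul_div_cancel₀ _ hb0.ne']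
        _ = b ^ α * (a / b) ^ α := Real.mul_rpow hb0.le (div_nonneg ha0.le hb0.le)
        _ ≤ b ^ α * (a / b) := by
            exact mul_le_mul_of_nonneg_left h1 (Real.rpow_nonneg hb0.le α)
    have h3 : a ^ α - b ^ α ≤ b ^ α * (a / b) - b ^ α := by linarith
    have h4 : b ^ α * (a / b) - b ^ α = b ^ (α - 1) * (a - b) := by
      rw [Real.rpow_sub hb0, Real.rpow_one]
      field_simp
    have h5 : b ^ (α - 1) ≤ m ^ (α - 1) :=
      Real.rpow_le_rpow_of_nonpos hm hb (by linarith)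
    calc a ^ α - b ^ α ≤ b ^ (α - 1) * (a - b) := by rw [← h4]; exact h3
      _ ≤ m ^ (α - 1) * (a - b) := by
          exact mul_le_mul_of_nonneg_right h5 (by linarith)
  rcases le_total y x with h | h
  · rw [abs_of_nonneg (sub_nonneg.2 h), abs_of_nonneg (sub_nonneg.2
      (Real.rpow_le_rpow (by linarith) h hα0.le))]
    · exact key x y hy h
  · rw [abs_of_nonpos (sub_nonpos.2 h), abs_of_nonpos (sub_nonpos.2
      (Real.rpow_le_rpow (by linarith) h hα0.le)), neg_sub, neg_sub]
    exact key y x hx h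

lemma inv_one_sub_le_exp {s : ℝ} (hs0 : 0 ≤ s) (hs1 : s ≤ 1/2) :
    (1 - s)⁻¹ ≤ rexp (s + 2 * s ^ 2) := by
  have h1 : (s + 2 * s ^ 2) + 1 ≤ rexp (s + 2 * s ^ 2) := Real.add_one_le_exp _
  have h2 : (1 - s)⁻¹ ≤ 1 + (s + 2 * s ^ 2) := by
    rw [inv_eq_one_div, div_le_iff₀ (by linarith)]
    nlinarith
  linarith

lemma inv_one_add_le_exp {s : ℝ} (hs0 : 0 ≤ s) (hs1 : s ≤ 1/2) :
    (1 + s)⁻¹ ≤ rexp (-s + s ^ 2) := by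
  have key : rexp (s - s ^ 2) ≤ 1 + s := by
    have h0 : 0 < 1 - (s - s ^ 2) := by nlinarith
    have h1 : rexp (s - s ^ 2) * (1 - (s - s ^ 2)) ≤ 1 := by
      have := Real.add_one_le_exp (-(s - s ^ 2))
      have h2 : (1 - (s - s^2)) ≤ rexp (-(s - s^2)) := by linarith
      calc rexp (s - s ^ 2) * (1 - (s - s ^ 2)) ≤ rexp (s - s ^ 2) * rexp (-(s - s ^ 2)) := by
            exact mul_le_mul_of_nonneg_left h2 (Real.exp_nonneg _)
        _ = 1 := by rw [← Real.exp_add]; simp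
    have h3 : rexp (s - s ^ 2) ≤ (1 - (s - s ^ 2))⁻¹ := by
      rw [inv_eq_one_div, le_div_iff₀ h0]; linarith
    have h4 : (1 - (s - s ^ 2))⁻¹ ≤ 1 + s := by
      rw [inv_eq_one_div, div_le_iff₀ h0]; nlinarith
    linarith
  have h5 : (0:ℝ) < 1 + s := by linarith
  rw [show (-s + s^2 : ℝ) = -(s - s^2) by ring, Real.exp_neg]
  exact inv_anti₀ (Real.exp_pos _) key

/-! ### The exponential measure: moment generating function -/

lemma gammaPDFReal_one_one (x : ℝ) :
    gammaPDFReal 1 1 x = if 0 ≤ x then rexp (-x) else 0 := by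
  unfold gammaPDFReal
  simp [Real.Gamma_one, Real.rpow_zero, Real.one_rpow]

lemma gammaPDF_one_one : gammaPDF 1 1 = fun x => ENNReal.ofReal (gammaPDFReal 1 1 x) :=
  funext fun x => gammaPDF_eq 1 1 x

lemma indicator_form (s : ℝ) :
    (fun x => rexp (s * x) * gammaPDFReal 1 1 x)
      = Set.indicator (Set.Ici (0:ℝ)) (fun x => rexp (-(1 - s) * x)) := by
  funext x
  rw [gammaPDFReal_one_one, Set.indicator_apply]
  by_cases h : (0:ℝ) ≤ x
  · rw [if_pos h, if_pos (Set.mem_Ici.2 h), ← Real.exp_add]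
    congr 1
    ring
  · rw [if_neg h, if_neg (fun hh => h (Set.mem_Ici.1 hh)), mul_zero]

lemma integrableOn_exp_Ici {s : ℝ} (hs : s < 1) :
    IntegrableOn (fun x => rexp (-(1 - s) * x)) (Set.Ici (0:ℝ)) := by
  exact (exp_neg_integrableOn_Ioi 0 (by linarith : (0:ℝ) < 1 - s)).congr_set_ae
    MeasureTheory.Ioi_ae_eq_Ici.symm

lemma integrable_exp_expMeasure {s : ℝ} (hs : s < 1) :
    Integrable (fun x => rexp (s * x)) (expMeasure 1) := by
  have heq : expMeasure 1 = volume.withDensity (fun x => ENNReal.ofReal (gammaPDFReal 1 1 x)) := by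
    rw [← gammaPDF_one_one]; rfl
  rw [heq, integrable_withDensity_iff ((measurable_gammaPDFReal 1 1).ennreal_ofReal)
    (Eventually.of_forall fun x => ENNReal.ofReal_lt_top)]
  have : (fun x => rexp (s * x) * (ENNReal.ofReal (gammaPDFReal 1 1 x)).toReal)
      = fun x => rexp (s * x) * gammaPDFReal 1 1 x := by
    funext x
    rw [ENNReal.toReal_ofReal (gammaPDFReal_nonneg zero_lt_one zero_lt_one x)]
  rw [this, indicator_form]
  exact ((integrableOn_exp_Ici hs).integrable_indicator measurableSet_Ici)

lemma integral_exp_expMeasure {s : ℝ} (hs : s < 1) :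
    ∫ x, rexp (s * x) ∂(expMeasure 1) = (1 - s)⁻¹ := by
  have h1s : (0:ℝ) < 1 - s := by linarith
  have hmeas : Measurable fun x => (gammaPDFReal 1 1 x).toNNReal :=
    (measurable_gammaPDFReal 1 1).real_toNNReal
  have heq : expMeasure 1
      = volume.withDensity (fun x => ((gammaPDFReal 1 1 x).toNNReal : ℝ≥0∞)) := by
    have : (fun x => ((gammaPDFReal 1 1 x).toNNReal : ℝ≥0∞))
        = fun x => ENNReal.ofReal (gammaPDFReal 1 1 x) := rfl
    rw [this, ← gammaPDF_one_one]; rfl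
  rw [heq, integral_withDensity_eq_integral_smul hmeas]
  have : (fun x => (gammaPDFReal 1 1 x).toNNReal • rexp (s * x))
      = Set.indicator (Set.Ici (0:ℝ)) (fun x => rexp (-(1 - s) * x)) := by
    rw [← indicator_form s]
    funext x
    rw [NNReal.smul_def, smul_eq_mul,
      Real.coe_toNNReal _ (gammaPDFReal_nonneg zero_lt_one zero_lt_one x), mul_comm]
  rw [this, integral_indicator measurableSet_Ici, integral_Ici_eq_integral_Ioi]
  have key := integral_comp_mul_left_Ioi (fun u => rexp (-u)) 0 h1s
  simp only [mul_zero, neg_mul] at key ⊢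
  rw [key, integral_exp_neg_Ioi_zero, smul_eq_mul, mul_one]

/-! ### mgf and Chernoff bounds for the arrival times -/

section Chernoff
variable {Ω : Type*} [MeasurableSpace Ω] (P : Measure Ω) [IsProbabilityMeasure P]
    (E : ℕ → Ω → ℝ) (hEmeas : ∀ k, Measurable (E k))
    (hindep : iIndepFun E P)
    (hElaw : ∀ k, Measure.map (E k) P = expMeasure 1)

include hEmeas hElaw in
omit [IsProbabilityMeasure P] in
lemma integrable_exp_E {s : ℝ} (hs : s < 1) (k : ℕ) :
    Integrable (fun ω => rexp (s * E k ω)) P := by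
  have h : Integrable (fun x => rexp (s * x)) (Measure.map (E k) P) := by
    rw [hElaw k]; exact integrable_exp_expMeasure hs
  have := (integrable_map_measure
    (by exact (Real.continuous_exp.comp (continuous_const.mul continuous_id)).aestronglyMeasurable)
    (hEmeas k).aemeasurable).mp h
  exact this

include hEmeas hElaw in
omit [IsProbabilityMeasure P] in
lemma mgf_E {s : ℝ} (hs : s < 1) (k : ℕ) : mgf (E k) P s = (1 - s)⁻¹ := by
  have : mgf (E k) P s = ∫ x, rexp (s * x) ∂(Measure.map (E k) P) := by
    rw [integral_map (hEmeas k).aemeasurable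
      (by exact (Real.continuous_exp.comp (continuous_const.mul continuous_id)).aestronglyMeasurable)]
    rfl
  rw [this, hElaw k, integral_exp_expMeasure hs]

include hEmeas hindep hElaw in
lemma mgf_arrival {s : ℝ} (hs : s < 1) (j : ℕ) :
    mgf (fun ω => arrival E j ω) P s = ((1 - s)⁻¹) ^ j := by
  have harr : (fun ω => arrival E j ω) = ∑ k ∈ Finset.range j, E k := by
    funext ω; simp [arrival]
  rw [harr, hindep.mgf_sum hEmeas (Finset.range j)]
  rw [Finset.prod_congr rfl (fun k _ => mgf_E P E hEmeas hElaw hs k), Finset.prod_const,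
    Finset.card_range]

include hEmeas hindep hElaw in
lemma integrable_exp_arrival {s : ℝ} (hs : s < 1) (j : ℕ) :
    Integrable (fun ω => rexp (s * arrival E j ω)) P := by
  have harr : (fun ω => arrival E j ω) = ∑ k ∈ Finset.range j, E k := by
    funext ω; simp [arrival]
  have key := hindep.integrable_exp_mul_sum (t := s) hEmeas
    (s := Finset.range j) (fun k _ => integrable_exp_E P E hEmeas hElaw hs k)
  simp only [Finset.sum_apply] at key
  exact key

include hEmeas hindep hElaw in
lemma tail_bound {δ : ℝ} (hδ0 : 0 < δ) (hδ1 : δ ≤ 1/2) (j : ℕ) :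
    P {ω | (j:ℝ) ^ ((1:ℝ)/2 + δ) ≤ |arrival E j ω - j|}
      ≤ ENNReal.ofReal (2 * rexp (-(j:ℝ) ^ (2*δ) / 8)) := by
  rcases Nat.eq_zero_or_pos j with hj | hj
  · subst hj
    have h1 : ((0:ℕ):ℝ) ^ (2*δ) = 0 := by
      rw [Nat.cast_zero, Real.zero_rpow (by positivity)]
    calc P _ ≤ 1 := prob_le_one
      _ ≤ ENNReal.ofReal (2 * rexp (-((0:ℕ):ℝ) ^ (2*δ) / 8)) := by
          have h2 : (2:ℝ) * rexp (-(0:ℝ)/8) = 2 := by norm_num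
          rw [h1, h2]
          exact ENNReal.one_le_ofReal.2 one_le_two
  -- main case
  have hj1 : (1:ℝ) ≤ (j:ℝ) := Nat.one_le_cast.2 hj
  have hjpos : (0:ℝ) < j := by linarith
  set x : ℝ := (j:ℝ) ^ ((1:ℝ)/2 + δ) with hxdef
  have hxpos : 0 < x := Real.rpow_pos_of_pos hjpos _
  have hxj : x ≤ (j:ℝ) := by
    calc x ≤ (j:ℝ) ^ (1:ℝ) := Real.rpow_le_rpow_of_exponent_le hj1 (by linarith)
      _ = (j:ℝ) := Real.rpow_one _
  set s : ℝ := x / (4*j) with hsdef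
  have hs0 : 0 < s := div_pos hxpos (by linarith)
  have hs12 : s ≤ 1/2 := by
    rw [hsdef, div_le_iff₀ (by linarith)]
    linarith
  have hs1 : s < 1 := lt_of_le_of_lt hs12 (by norm_num)
  have hxx : x * x = (j:ℝ) * (j:ℝ) ^ (2*δ) := by
    rw [hxdef, ← Real.rpow_add hjpos]
    rw [show (1:ℝ)/2 + δ + ((1:ℝ)/2 + δ) = 1 + 2*δ by ring, Real.rpow_add hjpos, Real.rpow_one]
  have hkey : -(s*x) + 2*(j:ℝ)*s^2 = -(j:ℝ)^(2*δ)/8 := by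
    have h48 : (4:ℝ)*j ≠ 0 := by positivity
    rw [hsdef]
    field_simp
    nlinarith [hxx]
  -- upper tail
  have hup : (P {ω | (j:ℝ) + x ≤ arrival E j ω}).toReal ≤ rexp (-(j:ℝ)^(2*δ)/8) := by
    have h1 := measure_ge_le_exp_mul_mgf (μ := P) (X := fun ω => arrival E j ω)
      ((j:ℝ) + x) hs0.le (integrable_exp_arrival P E hEmeas hindep hElaw hs1 j)
    rw [mgf_arrival P E hEmeas hindep hElaw hs1 j] at h1
    have h2 : ((1-s)⁻¹)^j ≤ rexp ((s + 2*s^2) * (j:ℝ)) := by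
      rw [mul_comm, Real.exp_nat_mul]
      exact pow_le_pow_left₀ (inv_nonneg.2 (by linarith)) (inv_one_sub_le_exp hs0.le hs12) j
    calc (P {ω | (j:ℝ) + x ≤ arrival E j ω}).toReal
        ≤ rexp (-s * ((j:ℝ) + x)) * ((1-s)⁻¹)^j := h1
      _ ≤ rexp (-s * ((j:ℝ) + x)) * rexp ((s + 2*s^2) * (j:ℝ)) :=
          mul_le_mul_of_nonneg_left h2 (Real.exp_nonneg _)
      _ = rexp (-s * ((j:ℝ) + x) + (s + 2*s^2) * (j:ℝ)) := (Real.exp_add _ _).symm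
      _ = rexp (-(j:ℝ)^(2*δ)/8) := by
          rw [show -s * ((j:ℝ) + x) + (s + 2*s^2) * (j:ℝ) = -(s*x) + 2*(j:ℝ)*s^2 by ring, hkey]
  -- lower tail
  have hlow : (P {ω | arrival E j ω ≤ (j:ℝ) - x}).toReal ≤ rexp (-(j:ℝ)^(2*δ)/8) := by
    have hs1' : -s < 1 := by linarith
    have h1 := measure_le_le_exp_mul_mgf (μ := P) (X := fun ω => arrival E j ω)
      (t := -s) ((j:ℝ) - x) (neg_nonpos.2 hs0.le)
      (integrable_exp_arrival P E hEmeas hindep hElaw hs1' j)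
    rw [mgf_arrival P E hEmeas hindep hElaw hs1' j, sub_neg_eq_add] at h1
    have h2 : ((1+s)⁻¹)^j ≤ rexp ((-s + s^2) * (j:ℝ)) := by
      rw [mul_comm, Real.exp_nat_mul]
      exact pow_le_pow_left₀ (by positivity) (inv_one_add_le_exp hs0.le hs12) j
    calc (P {ω | arrival E j ω ≤ (j:ℝ) - x}).toReal
        ≤ rexp (- -s * ((j:ℝ) - x)) * ((1+s)⁻¹)^j := h1
      _ ≤ rexp (- -s * ((j:ℝ) - x)) * rexp ((-s + s^2) * (j:ℝ)) :=
          mul_le_mul_of_nonneg_left h2 (Real.exp_nonneg _)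
      _ = rexp (- -s * ((j:ℝ) - x) + (-s + s^2) * (j:ℝ)) := (Real.exp_add _ _).symm
      _ ≤ rexp (-(j:ℝ)^(2*δ)/8) := by
          rw [Real.exp_le_exp, ← hkey]
          nlinarith [sq_nonneg s, hs0, hjpos]
  -- combine
  have hsub : {ω | x ≤ |arrival E j ω - j|}
      ⊆ {ω | (j:ℝ) + x ≤ arrival E j ω} ∪ {ω | arrival E j ω ≤ (j:ℝ) - x} := by
    intro ω h
    simp only [Set.mem_setOf_eq] at h
    rcases le_abs.1 h with h' | h'
    · left; simp only [Set.mem_setOf_eq]; linarith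
    · right; simp only [Set.mem_setOf_eq]; linarith
  have conv : ∀ (A : Set Ω), (P A).toReal ≤ rexp (-(j:ℝ)^(2*δ)/8) →
      P A ≤ ENNReal.ofReal (rexp (-(j:ℝ)^(2*δ)/8)) := by
    intro A h
    rw [← ENNReal.ofReal_toReal (measure_ne_top P A)]
    exact ENNReal.ofReal_le_ofReal h
  calc P {ω | x ≤ |arrival E j ω - j|}
      ≤ P ({ω | (j:ℝ) + x ≤ arrival E j ω} ∪ {ω | arrival E j ω ≤ (j:ℝ) - x}) := measure_mono hsub
    _ ≤ P {ω | (j:ℝ) + x ≤ arrival E j ω} + P {ω | arrival E j ω ≤ (j:ℝ) - x} :=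
        measure_union_le _ _
    _ ≤ ENNReal.ofReal (rexp (-(j:ℝ)^(2*δ)/8)) + ENNReal.ofReal (rexp (-(j:ℝ)^(2*δ)/8)) :=
        add_le_add (conv _ hup) (conv _ hlow)
    _ = ENNReal.ofReal (2 * rexp (-(j:ℝ)^(2*δ)/8)) := by
        rw [← ENNReal.ofReal_add (Real.exp_nonneg _) (Real.exp_nonneg _)]
        congr 1
        ring

end Chernoff

/-! ### Summability of the tail bounds -/

open Asymptotics in
lemma summable_tail {δ : ℝ} (hδ0 : 0 < δ) :
    Summable (fun j : ℕ => 2 * rexp (-(j:ℝ) ^ (2*δ) / 8)) := by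
  have h2δ : 0 < 2*δ := by linarith
  have hlog := isLittleO_log_rpow_atTop h2δ
  have hbound := hlog.def (by norm_num : (0:ℝ) < 1/16)
  have hEv : ∀ᶠ j : ℕ in atTop, ‖Real.log (j:ℝ)‖ ≤ (1/16) * ‖(j:ℝ) ^ (2*δ)‖ :=
    tendsto_natCast_atTop_atTop.eventually hbound
  have hEv1 : ∀ᶠ j : ℕ in atTop, (1:ℝ) ≤ (j:ℝ) :=
    tendsto_natCast_atTop_atTop.eventually_ge_atTop 1
  have hO : (fun j : ℕ => 2 * rexp (-(j:ℝ) ^ (2*δ) / 8)) =O[atTop]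
      (fun j : ℕ => (j:ℝ) ^ (-2:ℝ)) := by
    refine IsBigO.of_bound 2 ?_
    filter_upwards [hEv, hEv1] with j hj hj1
    have hjpos : (0:ℝ) < j := by linarith
    have hrne : (0:ℝ) ≤ (j:ℝ) ^ (2*δ) := Real.rpow_nonneg hjpos.le _
    have hlogj : 0 ≤ Real.log (j:ℝ) := Real.log_nonneg hj1
    rw [Real.norm_of_nonneg hlogj, Real.norm_of_nonneg hrne] at hj
    have hexp : rexp (-(j:ℝ) ^ (2*δ) / 8) ≤ (j:ℝ) ^ (-2:ℝ) := by
      conv_rhs => rw [Real.rpow_def_of_pos hjpos]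
      apply Real.exp_le_exp.2
      nlinarith
    have h1 : ‖2 * rexp (-(j:ℝ) ^ (2*δ) / 8)‖ = 2 * rexp (-(j:ℝ) ^ (2*δ) / 8) := by
      rw [Real.norm_of_nonneg (by positivity)]
    have h2 : ‖(j:ℝ) ^ (-2:ℝ)‖ = (j:ℝ) ^ (-2:ℝ) := by
      rw [Real.norm_of_nonneg (Real.rpow_nonneg hjpos.le _)]
    rw [h1, h2]
    linarith
  exact summable_of_isBigO_nat (Real.summable_nat_rpow.2 (by norm_num)) hO

/-! ### Deterministic part -/

noncomputable def dT1 (C α δ : ℝ) (n : ℕ) : ℝ :=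
  ((C + 1 + (n:ℝ) ^ ((3:ℝ)/4*((1:ℝ)/2+δ))) / n) ^ α
noncomputable def dT2 (C α δ : ℝ) (n : ℕ) : ℝ :=
  ((n:ℝ) ^ (-(1:ℝ)/4) / 2) ^ (α-1) * ((C + 1 + (n:ℝ) ^ ((1:ℝ)/2+δ)) / n)

lemma dT1_nonneg {C α δ : ℝ} (hC : 0 ≤ C) (n : ℕ) : 0 ≤ dT1 C α δ n := by
  unfold dT1
  apply Real.rpow_nonneg
  positivity

lemma dT2_nonneg {C α δ : ℝ} (hC : 0 ≤ C) (n : ℕ) : 0 ≤ dT2 C α δ n := by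
  unfold dT2
  apply mul_nonneg (Real.rpow_nonneg (by positivity) _) (by positivity)

lemma nat_rpow_tendsto_zero {a : ℝ} (ha : a < 0) :
    Filter.Tendsto (fun n : ℕ => (n:ℝ) ^ a) atTop (nhds 0) := by
  have h := tendsto_rpow_neg_atTop (neg_pos.2 ha)
  rw [neg_neg] at h
  exact h.comp tendsto_natCast_atTop_atTop

lemma eventually_nat_le_rpow (c : ℝ) {a : ℝ} (ha : 0 < a) :
    ∀ᶠ n : ℕ in atTop, c ≤ (n:ℝ) ^ a :=
  ((tendsto_rpow_atTop ha).comp tendsto_natCast_atTop_atTop).eventually_ge_atTop c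

lemma sup_bound_step {α δ C : ℝ} (hα0 : 0 < α) (hα1 : α < 1) (hδ0 : 0 < δ) (hC : 0 ≤ C)
    (g : ℕ → ℝ) (hg : ∀ j, 0 ≤ g j)
    (hb : ∀ j : ℕ, |g j - j| ≤ C + (j:ℝ) ^ ((1:ℝ)/2 + δ))
    {n : ℕ} (hn1 : 1 ≤ n)
    (hnb : 2*(C + 1 + (n:ℝ) ^ ((1:ℝ)/2+δ)) ≤ (n:ℝ) ^ ((3:ℝ)/4))
    {t : ℝ} (ht0 : 0 ≤ t) (ht1 : t ≤ 1) :
    |(g ⌊(n:ℝ) * t⌋₊ / (n:ℝ)) ^ α - t ^ α| ≤ dT1 C α δ n + dT2 C α δ n := by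
  have hnpos : (0:ℝ) < n := by exact_mod_cast hn1
  have hm_pos : (0:ℝ) < (n:ℝ)^(-(1:ℝ)/4)/2 := by positivity
  have hh0 : (0:ℝ) ≤ (C + 1 + (n:ℝ)^((1:ℝ)/2+δ))/n := by positivity
  have hhm : (C + 1 + (n:ℝ)^((1:ℝ)/2+δ))/n ≤ (n:ℝ)^(-(1:ℝ)/4)/2 := by
    rw [div_le_div_iff₀ hnpos (by norm_num : (0:ℝ) < 2)]
    have e : (n:ℝ)^(-(1:ℝ)/4) * n = (n:ℝ)^((3:ℝ)/4) := by
      nth_rewrite 2 [← Real.rpow_one (n:ℝ)]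
      rw [← Real.rpow_add hnpos]; norm_num
    rw [e]; linarith
  have hT1nn : 0 ≤ dT1 C α δ n := dT1_nonneg hC n
  have hT2nn : 0 ≤ dT2 C α δ n := dT2_nonneg hC n
  set j : ℕ := ⌊(n:ℝ) * t⌋₊ with hj
  have hnt0 : 0 ≤ (n:ℝ) * t := mul_nonneg hnpos.le ht0
  have hjle : (j:ℝ) ≤ (n:ℝ) * t := Nat.floor_le hnt0
  have hjgt : (n:ℝ) * t < (j:ℝ) + 1 := Nat.lt_floor_add_one _
  have hx0 : 0 ≤ g j / n := div_nonneg (hg j) hnpos.le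
  have hdist : |g j / n - t| ≤ (C + 1 + ((n:ℝ)*t)^((1:ℝ)/2+δ))/n := by
    have h1 : |g j - (n:ℝ)*t| ≤ |g j - (j:ℝ)| + |(j:ℝ) - (n:ℝ)*t| := abs_sub_le _ _ _
    have h2 : |(j:ℝ) - (n:ℝ)*t| ≤ 1 := abs_le.2 ⟨by linarith, by linarith⟩
    have h3 : (j:ℝ)^((1:ℝ)/2+δ) ≤ ((n:ℝ)*t)^((1:ℝ)/2+δ) :=
      Real.rpow_le_rpow (Nat.cast_nonneg j) hjle (by linarith)
    have h4 : |g j - (j:ℝ)| ≤ C + (j:ℝ)^((1:ℝ)/2+δ) := hb j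
    have h5 : g j / n - t = (g j - (n:ℝ)*t)/n := by field_simp
    rw [h5, abs_div, abs_of_pos hnpos]
    gcongr
    linarith
  rcases le_total t ((n:ℝ)^(-(1:ℝ)/4)) with hts | hts
  · -- small t region
    have hd1 : ((n:ℝ)*t)^((1:ℝ)/2+δ) ≤ (n:ℝ)^((3:ℝ)/4*((1:ℝ)/2+δ)) := by
      have h6 : (n:ℝ)*t ≤ (n:ℝ)^((3:ℝ)/4) := by
        have h6a : (n:ℝ)*t ≤ (n:ℝ) * (n:ℝ)^(-(1:ℝ)/4) :=
          mul_le_mul_of_nonneg_left hts hnpos.le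
        have h7 : (n:ℝ) * (n:ℝ)^(-(1:ℝ)/4) = (n:ℝ)^((3:ℝ)/4) := by
          nth_rewrite 1 [← Real.rpow_one (n:ℝ)]
          rw [← Real.rpow_add hnpos]; norm_num
        linarith
      calc ((n:ℝ)*t)^((1:ℝ)/2+δ) ≤ ((n:ℝ)^((3:ℝ)/4))^((1:ℝ)/2+δ) :=
            Real.rpow_le_rpow hnt0 h6 (by linarith)
        _ = (n:ℝ)^((3:ℝ)/4*((1:ℝ)/2+δ)) := by
            rw [← Real.rpow_mul (Nat.cast_nonneg n)]
    have hF : |(g j / n) ^ α - t ^ α| ≤ dT1 C α δ n := by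
      calc |(g j / n) ^ α - t ^ α| ≤ |g j / n - t| ^ α :=
            abs_rpow_sub_rpow_le hα0 hα1.le hx0 ht0
        _ ≤ dT1 C α δ n := by
            unfold dT1
            apply Real.rpow_le_rpow (abs_nonneg _) ?_ hα0.le
            apply hdist.trans
            gcongr
    linarith
  · -- large t region
    have hdh : |g j / n - t| ≤ (C + 1 + (n:ℝ)^((1:ℝ)/2+δ))/n := by
      apply hdist.trans
      gcongr
      exact mul_le_of_le_one_right hnpos.le ht1
    have htm : (n:ℝ)^(-(1:ℝ)/4)/2 ≤ t := by
      have := Real.rpow_nonneg (Nat.cast_nonneg n) (-(1:ℝ)/4)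
      linarith
    have hxm : (n:ℝ)^(-(1:ℝ)/4)/2 ≤ g j / n := by
      have h8 := (abs_le.1 hdh).1
      linarith
    have hF : |(g j / n) ^ α - t ^ α| ≤ dT2 C α δ n := by
      calc |(g j / n) ^ α - t ^ α|
          ≤ ((n:ℝ)^(-(1:ℝ)/4)/2) ^ (α-1) * |g j / n - t| :=
            abs_rpow_sub_rpow_le' hα0 hα1.le hm_pos hxm htm
        _ ≤ dT2 C α δ n := by
            unfold dT2
            exact mul_le_mul_of_nonneg_left hdh (Real.rpow_nonneg hm_pos.le _)
    linarith

lemma t1_tendsto {α δ C : ℝ} (hα0 : 0 < α) (hα1 : α < 1) (hδ : δ = (1-α)/8) (hC : 0 ≤ C) :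
    Filter.Tendsto (fun n : ℕ => (n:ℝ)^(α/2) * dT1 C α δ n) atTop (nhds 0) := by
  have hδ0 : 0 < δ := by rw [hδ]; linarith
  have hδ8 : δ < 1/8 := by rw [hδ]; linarith
  have ha1 : (3:ℝ)/4*((1:ℝ)/2+δ) - 1/2 < 0 := by linarith
  set w : ℕ → ℝ := fun n =>
    (C+1)*(n:ℝ)^(-(1:ℝ)/2) + (n:ℝ)^((3:ℝ)/4*((1:ℝ)/2+δ) - 1/2) with hw
  have hwt : Filter.Tendsto w atTop (nhds 0) := by
    have l1 : Filter.Tendsto (fun n : ℕ => (C+1)*(n:ℝ)^(-(1:ℝ)/2)) atTop (nhds 0) := by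
      have h := (nat_rpow_tendsto_zero (by norm_num : -(1:ℝ)/2 < 0)).const_mul (C+1)
      rwa [mul_zero] at h
    have h := l1.add (nat_rpow_tendsto_zero ha1)
    rwa [add_zero] at h
  have hcomp : Filter.Tendsto (fun n : ℕ => (w n)^α) atTop (nhds 0) := by
    have hcont : ContinuousAt (fun x : ℝ => x ^ α) 0 :=
      Real.continuousAt_rpow_const 0 α (Or.inr hα0.le)
    have := hcont.tendsto.comp hwt
    simpa [Real.zero_rpow hα0.ne', Function.comp_def] using this
  apply hcomp.congr'
  filter_upwards [eventually_ge_atTop 1] with n hn1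
  have hnpos : (0:ℝ) < n := by exact_mod_cast hn1
  unfold dT1
  rw [show α/2 = (1:ℝ)/2*α by ring, Real.rpow_mul (Nat.cast_nonneg n),
    ← Real.mul_rpow (Real.rpow_nonneg (Nat.cast_nonneg n) _)
      (div_nonneg (by nlinarith [Real.rpow_nonneg (Nat.cast_nonneg n) ((3:ℝ)/4*((1:ℝ)/2+δ))]) hnpos.le)]
  congr 1
  have d1 : (n:ℝ)^((1:ℝ)/2)/(n:ℝ) = (n:ℝ)^(-(1:ℝ)/2) := by
    rw [show -(1:ℝ)/2 = 1/2 - 1 by norm_num, Real.rpow_sub hnpos, Real.rpow_one]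
  have d2 : (n:ℝ)^((3:ℝ)/4*((1:ℝ)/2+δ))*(n:ℝ)^((1:ℝ)/2)/(n:ℝ)
      = (n:ℝ)^((3:ℝ)/4*((1:ℝ)/2+δ) - 1/2) := by
    rw [← Real.rpow_add hnpos,
      show (3:ℝ)/4*((1:ℝ)/2+δ) - 1/2 = ((3:ℝ)/4*((1:ℝ)/2+δ) + 1/2) - 1 by ring,
      Real.rpow_sub hnpos, Real.rpow_one]
  calc w n = (C+1)*((n:ℝ)^((1:ℝ)/2)/(n:ℝ))
        + (n:ℝ)^((3:ℝ)/4*((1:ℝ)/2+δ))*(n:ℝ)^((1:ℝ)/2)/(n:ℝ) := by rw [hw, d1, d2]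
    _ = (n:ℝ)^((1:ℝ)/2) * ((C + 1 + (n:ℝ)^((3:ℝ)/4*((1:ℝ)/2+δ)))/(n:ℝ)) := by ring

lemma t2_tendsto {α δ C : ℝ} (hα0 : 0 < α) (hα1 : α < 1) (hδ : δ = (1-α)/8) (hC : 0 ≤ C) :
    Filter.Tendsto (fun n : ℕ => (n:ℝ)^(α/2) * dT2 C α δ n) atTop (nhds 0) := by
  have hδ0 : 0 < δ := by rw [hδ]; linarith
  have ha2 : α/2+(1-α)/4-1 < 0 := by linarith
  have ha3 : α/2+(1-α)/4+((1:ℝ)/2+δ)-1 < 0 := by rw [hδ]; linarith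
  set v : ℕ → ℝ := fun n => 2^((1:ℝ)-α) *
    ((C+1)*(n:ℝ)^(α/2+(1-α)/4-1) + (n:ℝ)^(α/2+(1-α)/4+((1:ℝ)/2+δ)-1)) with hv
  have hvt : Filter.Tendsto v atTop (nhds 0) := by
    have l1 : Filter.Tendsto (fun n : ℕ => (C+1)*(n:ℝ)^(α/2+(1-α)/4-1)) atTop (nhds 0) := by
      have h := (nat_rpow_tendsto_zero ha2).const_mul (C+1)
      rwa [mul_zero] at h
    have l2 := l1.add (nat_rpow_tendsto_zero ha3)
    rw [add_zero] at l2
    have h := l2.const_mul ((2:ℝ)^((1:ℝ)-α))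
    rwa [mul_zero] at h
  apply hvt.congr'
  filter_upwards [eventually_ge_atTop 1] with n hn1
  have hnpos : (0:ℝ) < n := by exact_mod_cast hn1
  unfold dT2
  have step1 : ((n:ℝ)^(-(1:ℝ)/4)/2)^(α-1) = 2^((1:ℝ)-α) * (n:ℝ)^((1-α)/4) := by
    rw [Real.div_rpow (Real.rpow_nonneg (Nat.cast_nonneg n) _) (by norm_num : (0:ℝ) ≤ 2),
      ← Real.rpow_mul (Nat.cast_nonneg n),
      show -(1:ℝ)/4*(α-1) = (1-α)/4 by ring,
      show α-1 = -((1:ℝ)-α) by ring,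
      Real.rpow_neg (by norm_num : (0:ℝ) ≤ 2), div_inv_eq_mul, mul_comm]
  rw [step1]
  have i1 : (n:ℝ)^(α/2)*(n:ℝ)^((1-α)/4)/(n:ℝ) = (n:ℝ)^(α/2+(1-α)/4-1) := by
    rw [← Real.rpow_add hnpos, Real.rpow_sub hnpos, Real.rpow_one]
  have i2 : (n:ℝ)^(α/2)*(n:ℝ)^((1-α)/4)*(n:ℝ)^((1:ℝ)/2+δ)/(n:ℝ)
      = (n:ℝ)^(α/2+(1-α)/4+((1:ℝ)/2+δ)-1) := by
    rw [← Real.rpow_add hnpos, ← Real.rpow_add hnpos, Real.rpow_sub hnpos, Real.rpow_one]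
  calc v n = 2^((1:ℝ)-α) * ((C+1)*((n:ℝ)^(α/2)*(n:ℝ)^((1-α)/4)/(n:ℝ))
        + (n:ℝ)^(α/2)*(n:ℝ)^((1-α)/4)*(n:ℝ)^((1:ℝ)/2+δ)/(n:ℝ)) := by rw [hv, i1, i2]
    _ = (n:ℝ)^(α/2) * (2^((1:ℝ)-α) * (n:ℝ)^((1-α)/4)
        * ((C + 1 + (n:ℝ)^((1:ℝ)/2+δ))/(n:ℝ))) := by ring

lemma det_tendsto {α δ : ℝ} (hα0 : 0 < α) (hα1 : α < 1) (hδ : δ = (1-α)/8)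
    (g : ℕ → ℝ) (hg : ∀ j, 0 ≤ g j) {C : ℝ} (hC : 0 ≤ C)
    (hb : ∀ j : ℕ, |g j - j| ≤ C + (j:ℝ) ^ ((1:ℝ)/2 + δ)) :
    Filter.Tendsto (fun n : ℕ => (n:ℝ) ^ (α/2) *
      ⨆ t : Set.Icc (0:ℝ) 1, |(g ⌊(n:ℝ) * (t:ℝ)⌋₊ / (n:ℝ)) ^ α - (t:ℝ) ^ α|)
      atTop (nhds 0) := by
  haveI : Nonempty (Set.Icc (0:ℝ) 1) := ⟨⟨0, by constructor <;> norm_num⟩⟩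
  have hδ0 : 0 < δ := by rw [hδ]; linarith
  have hδ8 : δ < 1/8 := by rw [hδ]; linarith
  have hevb : ∀ᶠ n : ℕ in atTop, 2*(C + 1 + (n:ℝ)^((1:ℝ)/2+δ)) ≤ (n:ℝ)^((3:ℝ)/4) := by
    filter_upwards [eventually_nat_le_rpow (4*(C+1)) (by norm_num : (0:ℝ) < 3/4),
      eventually_nat_le_rpow 4 (by linarith : (0:ℝ) < 1/4 - δ), eventually_ge_atTop 1]
      with n h1 h2 hn1
    have hnpos : (0:ℝ) < n := by exact_mod_cast hn1
    have key : 4*(n:ℝ)^((1:ℝ)/2+δ) ≤ (n:ℝ)^((3:ℝ)/4) := by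
      have h3 : 4*(n:ℝ)^((1:ℝ)/2+δ) ≤ (n:ℝ)^((1:ℝ)/4-δ) * (n:ℝ)^((1:ℝ)/2+δ) :=
        mul_le_mul_of_nonneg_right h2 (Real.rpow_nonneg hnpos.le _)
      have h4 : (n:ℝ)^((1:ℝ)/4-δ) * (n:ℝ)^((1:ℝ)/2+δ) = (n:ℝ)^((3:ℝ)/4) := by
        rw [← Real.rpow_add hnpos]; norm_num
      linarith
    nlinarith [Real.rpow_nonneg hnpos.le ((1:ℝ)/2+δ)]
  have hupper : ∀ᶠ n : ℕ in atTop,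
      (n:ℝ)^(α/2) * (⨆ t : Set.Icc (0:ℝ) 1,
        |(g ⌊(n:ℝ) * (t:ℝ)⌋₊ / (n:ℝ)) ^ α - (t:ℝ) ^ α|)
      ≤ (n:ℝ)^(α/2) * (dT1 C α δ n + dT2 C α δ n) := by
    filter_upwards [eventually_ge_atTop 1, hevb] with n hn1 hnb
    refine mul_le_mul_of_nonneg_left ?_ (Real.rpow_nonneg (Nat.cast_nonneg n) _)
    refine ciSup_le fun t => ?_
    exact sup_bound_step hα0 hα1 hδ0 hC g hg hb hn1 hnb t.2.1 t.2.2
  have hlower : ∀ n : ℕ, 0 ≤ (n:ℝ)^(α/2) *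
      ⨆ t : Set.Icc (0:ℝ) 1, |(g ⌊(n:ℝ) * (t:ℝ)⌋₊ / (n:ℝ)) ^ α - (t:ℝ) ^ α| :=
    fun n => mul_nonneg (Real.rpow_nonneg (Nat.cast_nonneg n) _)
      (Real.iSup_nonneg fun t => abs_nonneg _)
  have hmaj : Filter.Tendsto
      (fun n : ℕ => (n:ℝ)^(α/2) * (dT1 C α δ n + dT2 C α δ n)) atTop (nhds 0) := by
    have h := (t1_tendsto hα0 hα1 hδ hC).add (t2_tendsto hα0 hα1 hδ hC)
    rw [add_zero] at h
    exact h.congr fun n => (mul_add _ _ _).symm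
  exact tendsto_of_tendsto_of_tendsto_of_le_of_le' tendsto_const_nhds hmaj
    (Eventually.of_forall hlower) hupper

/-! ### Almost-sure nonnegativity -/

lemma expMeasure_Iio_zero : (expMeasure 1) (Set.Iio 0) = 0 := by
  have heq : expMeasure 1 = volume.withDensity (gammaPDF 1 1) := rfl
  rw [heq, withDensity_apply _ measurableSet_Iio]
  exact lintegral_gammaPDF_of_nonpos le_rfl

/-! ### Main theorem -/

/-- **Negligibility of the centering discrepancy in the de-Poissonization**
(the claim `lim_n ŵd_n = 0` a.s., equation (eq:center diff)): for every `α ∈ (0,1)`,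
almost surely `lim_{n→∞} n^{α/2} sup_{t ∈ [0,1]} |(Γ_{⌊nt⌋}/n)^α - t^α| = 0`, i.e.
`sup_{t ∈ [0,1]} |(n λ_n(t))^α - (n t)^α| = o(n^{α/2})` a.s., with `λ_n(t) = Γ_{⌊nt⌋}/n`. -/
theorem centering_discrepancy_negligible {Ω : Type*} [MeasurableSpace Ω]
    (P : Measure Ω) [IsProbabilityMeasure P]
    (E : ℕ → Ω → ℝ) (hEmeas : ∀ k, Measurable (E k))
    (hindep : iIndepFun E P)
    (hElaw : ∀ k, Measure.map (E k) P = expMeasure 1)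
    (α : ℝ) (hα0 : 0 < α) (hα1 : α < 1) :
    ∀ᵐ ω ∂P,
      Tendsto (fun n : ℕ => (n : ℝ) ^ (α / 2) *
          ⨆ t : Set.Icc (0 : ℝ) 1,
            |(arrival E ⌊(n : ℝ) * (t : ℝ)⌋₊ ω / (n : ℝ)) ^ α - (t : ℝ) ^ α|)
        atTop (nhds 0) := by
  set δ : ℝ := (1-α)/8 with hδdef
  have hδ0 : 0 < δ := by rw [hδdef]; linarith
  have hδ12 : δ ≤ 1/2 := by rw [hδdef]; linarith
  -- Borel–Cantelli
  set A : ℕ → Set Ω := fun j => {ω | (j:ℝ) ^ ((1:ℝ)/2 + δ) ≤ |arrival E j ω - j|} with hA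
  have htsum : (∑' j, P (A j)) ≠ ∞ := by
    have hle : ∀ j, P (A j) ≤ ENNReal.ofReal (2 * rexp (-(j:ℝ) ^ (2*δ) / 8)) :=
      fun j => tail_bound P E hEmeas hindep hElaw hδ0 hδ12 j
    have h1 : (∑' j, P (A j)) ≤ ∑' j : ℕ, ENNReal.ofReal (2 * rexp (-(j:ℝ) ^ (2*δ) / 8)) :=
      ENNReal.tsum_le_tsum hle
    have h2 : (∑' j : ℕ, ENNReal.ofReal (2 * rexp (-(j:ℝ) ^ (2*δ) / 8)))
        = ENNReal.ofReal (∑' j : ℕ, 2 * rexp (-(j:ℝ) ^ (2*δ) / 8)) :=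
      (ENNReal.ofReal_tsum_of_nonneg (fun j => by positivity) (summable_tail hδ0)).symm
    rw [h2] at h1
    exact ne_top_of_le_ne_top ENNReal.ofReal_ne_top h1
  have hBC : ∀ᵐ ω ∂P, ∀ᶠ j in atTop, ω ∉ A j := ae_eventually_notMem htsum
  -- a.s. nonnegativity
  have hnonneg : ∀ᵐ ω ∂P, ∀ k, 0 ≤ E k ω := by
    rw [ae_all_iff]
    intro k
    have hnull : P (E k ⁻¹' Set.Iio 0) = 0 := by
      rw [← Measure.map_apply (hEmeas k) measurableSet_Iio, hElaw k]
      exact expMeasure_Iio_zero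
    rw [ae_iff]
    convert hnull using 2
    ext ω
    simp [not_le]
  filter_upwards [hBC, hnonneg] with ω hω hpos
  set g : ℕ → ℝ := fun j => arrival E j ω with hgdef
  have hg : ∀ j, 0 ≤ g j := fun j => Finset.sum_nonneg fun k _ => hpos k
  obtain ⟨N, hN⟩ := eventually_atTop.1 hω
  set C : ℝ := ∑ i ∈ Finset.range N, |g i - (i:ℝ)| with hCdef
  have hC : 0 ≤ C := Finset.sum_nonneg fun i _ => abs_nonneg _
  have hb : ∀ j : ℕ, |g j - j| ≤ C + (j:ℝ) ^ ((1:ℝ)/2 + δ) := by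
    intro j
    rcases lt_or_ge j N with hjN | hjN
    · have h1 : |g j - (j:ℝ)| ≤ C :=
        Finset.single_le_sum (f := fun i => |g i - (i:ℝ)|) (fun i _ => abs_nonneg _)
          (Finset.mem_range.2 hjN)
      have h2 : (0:ℝ) ≤ (j:ℝ) ^ ((1:ℝ)/2 + δ) := Real.rpow_nonneg (Nat.cast_nonneg j) _
      linarith
    · have h1 := hN j hjN
      rw [hA] at h1
      simp only [Set.mem_setOf_eq, not_le] at h1
      linarith
  exact det_tendsto hα0 hα1 hδdef g hg hC hb
end
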